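/- arXiv:2007.12922 — 5 statements merged into one kernel-verified Lean document; each statement's English description precedes it below -/
import Mathlib

section
/- (Lemma S-(A4.2c).) Let D* be a 𝒢-measurable ℝ^p-valued random variable with the required integrability. Define Γ* = T⁻¹·( D* − (T*)⁻¹·E[T⁻¹·D*] ). Then: (i) Γ* is 𝒢-measurable with E[Γ*] = 0, so Γ*·W·ε ∈ Λ̃⁽²⁾; (ii) D*·T⁻¹·W·ε − Γ*·W·ε = E[D*·T⁻¹]·(T*·T)⁻¹·W·ε, and this element is orthogonal to every element of Λ̃⁽²⁾. Consequently, the orthogonal projection of D*·T⁻¹·W·ε onto the orthogonal complement of Λ̃⁽²⁾ equals E[D*·T⁻¹]·(T*·T)⁻¹·W·ε. In particular, taking D* = c·T with c ∈ ℝ^p a constant vector, the projection of c·W·ε onto Λ̃⁽²⁾^⊥ is c·(T*·T)⁻¹·W·ε. -/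
open MeasureTheory
open scoped RealInnerProductSpace

open scoped ENNReal

/-- If `φ ≥ 0` is integrable with `E[φ|mH] ≤ C` a.e., and `ψ ≥ 0` is `mH`-measurable
and integrable, then `ψ * φ` is integrable. -/
lemma integrable_mul_of_condexp_le
    {Ω : Type*} {mΩ : MeasurableSpace Ω} {P : Measure Ω} [IsProbabilityMeasure P]
    {mH : MeasurableSpace Ω} (hHF : mH ≤ mΩ)
    {φ : Ω → ℝ} (hφ : Integrable φ P) (hφ0 : 0 ≤ᵐ[P] φ)
    {C : ℝ} (hC : P[φ|mH] ≤ᵐ[P] fun _ => C)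
    {ψ : Ω → ℝ} (hψm : StronglyMeasurable[mH] ψ) (hψ0 : ∀ ω, 0 ≤ ψ ω)
    (hψ : Integrable ψ P) :
    Integrable (fun ω => ψ ω * φ ω) P := by
  haveI : SigmaFinite (P.trim hHF) := by
    exact isFiniteMeasure_trim hHF |>.toSigmaFinite
  have hC0 : 0 ≤ C := by
    have h0 : 0 ≤ᵐ[P] P[φ|mH] := condExp_nonneg hφ0
    obtain ⟨ω, h1, h2⟩ := (h0.and hC).exists
    exact le_trans h1 h2
  set ψn : ℕ → Ω → ℝ := fun n ω => min (ψ ω) n with hψn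
  have hψn_meas : ∀ n, StronglyMeasurable[mH] (ψn n) :=
    fun n => hψm.inf stronglyMeasurable_const
  have hψn_nonneg : ∀ n ω, 0 ≤ ψn n ω := fun n ω => le_min (hψ0 ω) (n.cast_nonneg)
  have hψn_le : ∀ n ω, ψn n ω ≤ ψ ω := fun n ω => min_le_left _ _
  have hmeasF : AEStronglyMeasurable[mΩ] (fun ω => ψ ω * φ ω) P :=
    ((hψm.mono hHF).aestronglyMeasurable).mul hφ.1
  have hψn_int : ∀ n, Integrable (fun ω => ψn n ω * φ ω) P := by
    intro n
    refine (hφ.norm.const_mul (n : ℝ)).mono'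
      (((hψn_meas n).mono hHF).aestronglyMeasurable.mul hφ.1) ?_
    filter_upwards with ω
    rw [norm_mul]
    gcongr
    rw [Real.norm_eq_abs, abs_of_nonneg (hψn_nonneg n ω)]
    exact min_le_right _ _
  -- key bound on truncated integrals
  have key : ∀ n, ∫ ω, ψn n ω * φ ω ∂P ≤ C * ∫ ω, ψ ω ∂P := by
    intro n
    have h1 : ∫ ω, ψn n ω * φ ω ∂P = ∫ ω, (ψn n * P[φ|mH]) ω ∂P := by
      rw [← integral_condExp hHF (f := fun ω => ψn n ω * φ ω)]
      refine integral_congr_ae ?_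
      exact condExp_mul_of_stronglyMeasurable_left (hψn_meas n) (hψn_int n) hφ
    rw [h1]
    have hrhs : Integrable (fun ω => C * ψ ω) P := hψ.const_mul C
    have hlhs : Integrable (ψn n * P[φ|mH]) P := by
      refine ((integrable_condExp (m := mH) (μ := P) (f := φ)).norm.const_mul (n : ℝ)).mono'
        (((hψn_meas n).mono hHF).aestronglyMeasurable.mul
          (stronglyMeasurable_condExp.mono hHF).aestronglyMeasurable) ?_
      filter_upwards with ω
      rw [Pi.mul_apply, norm_mul]
      gcongr
      rw [Real.norm_eq_abs, abs_of_nonneg (hψn_nonneg n ω)]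
      exact min_le_right _ _
    have : ∫ ω, (ψn n * P[φ|mH]) ω ∂P ≤ ∫ ω, C * ψ ω ∂P := by
      refine integral_mono_ae hlhs hrhs ?_
      filter_upwards [condExp_nonneg (m := mH) hφ0, hC] with ω h0 h1
      calc ψn n ω * (P[φ|mH]) ω ≤ ψn n ω * C := by
            exact mul_le_mul_of_nonneg_left h1 (hψn_nonneg n ω)
        _ ≤ ψ ω * C := mul_le_mul_of_nonneg_right (hψn_le n ω) hC0
        _ = C * ψ ω := mul_comm _ _
    calc ∫ ω, (ψn n * P[φ|mH]) ω ∂P ≤ ∫ ω, C * ψ ω ∂P := this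
      _ = C * ∫ ω, ψ ω ∂P := integral_const_mul C ψ
  -- finite integral via monotone convergence
  refine ⟨hmeasF, ?_⟩
  rw [hasFiniteIntegral_iff_norm]
  have hae : ∀ᵐ ω ∂P, ENNReal.ofReal ‖ψ ω * φ ω‖ = ⨆ n, ENNReal.ofReal (ψn n ω * φ ω) := by
    filter_upwards [hφ0] with ω h0
    have hlim : ∀ n : ℕ, ψ ω ≤ (n:ℝ) → ψn n ω * φ ω = ψ ω * φ ω := by
      intro n hn; rw [hψn]; simp [min_eq_left hn]
    have hle : ∀ n, ENNReal.ofReal (ψn n ω * φ ω) ≤ ENNReal.ofReal (ψ ω * φ ω) := by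
      intro n; exact ENNReal.ofReal_le_ofReal (mul_le_mul_of_nonneg_right (hψn_le n ω) h0)
    rw [Real.norm_of_nonneg (mul_nonneg (hψ0 ω) h0)]
    refine le_antisymm ?_ (iSup_le hle)
    obtain ⟨n, hn⟩ := exists_nat_ge (ψ ω)
    rw [← hlim n hn]
    exact le_iSup (fun n => ENNReal.ofReal (ψn n ω * φ ω)) n
  rw [lintegral_congr_ae hae]
  have hmono : ∀ᵐ ω ∂P, Monotone fun n => ENNReal.ofReal (ψn n ω * φ ω) := by
    filter_upwards [hφ0] with ω h0
    intro a b hab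
    refine ENNReal.ofReal_le_ofReal (mul_le_mul_of_nonneg_right ?_ h0)
    exact min_le_min le_rfl (by exact_mod_cast hab)
  rw [lintegral_iSup' (fun n => ((hψn_int n).1.aemeasurable).ennreal_ofReal) hmono]
  have hbd : ∀ n, ∫⁻ a, ENNReal.ofReal (ψn n a * φ a) ∂P ≤ ENNReal.ofReal (C * ∫ ω, ψ ω ∂P) := by
    intro n
    have hnn : 0 ≤ᵐ[P] fun ω => ψn n ω * φ ω := by
      filter_upwards [hφ0] with ω h0; exact mul_nonneg (hψn_nonneg n ω) h0
    rw [← ofReal_integral_eq_lintegral_ofReal (hψn_int n) hnn]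
    exact ENNReal.ofReal_le_ofReal (key n)
  exact lt_of_le_of_lt (iSup_le hbd) ENNReal.ofReal_lt_top

open scoped RealInnerProductSpace ENNReal

lemma my_integral_smul_const {Ω : Type*} {m : MeasurableSpace Ω} (P : MeasureTheory.Measure Ω)
    {E : Type*} [NormedAddCommGroup E] [NormedSpace ℝ E] [CompleteSpace E]
    (f : Ω → ℝ) (c : E) : ∫ ω, f ω • c ∂P = (∫ ω, f ω ∂P) • c :=
  integral_smul_const f c


/-- Lemma S-(A4.2c): with `Γ* = T⁻¹(D* − (T*)⁻¹E[T⁻¹D*])`,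
`Γ*·W·ε ∈ Λ̃⁽²⁾`, the difference `D*·T⁻¹·W·ε − Γ*·W·ε` equals
`E[D*·T⁻¹]·(T*·T)⁻¹·W·ε` and is orthogonal to `Λ̃⁽²⁾`; hence the projection of
`D*·T⁻¹·W·ε` onto `Λ̃⁽²⁾^⊥` is `E[D*·T⁻¹]·(T*·T)⁻¹·W·ε`, and in particular the
projection of `c·W·ε` onto `Λ̃⁽²⁾^⊥` is `c·(T*·T)⁻¹·W·ε`. -/
theorem projection_onto_Lambda2tilde_perp
    {Ω : Type*} {mΩ : MeasurableSpace Ω} (P : Measure Ω) [IsProbabilityMeasure P]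
    {p : ℕ} {mG mH : MeasurableSpace Ω} (hGH : mG ≤ mH) (hHF : mH ≤ mΩ)
    (ε : Ω → ℝ) (hε : MemLp ε 2 P) (hεH : P[ε|mH] =ᵐ[P] 0)
    (c₁ c₂ : ℝ) (hc₁ : 0 < c₁)
    (hvar : ∀ᵐ ω ∂P, c₁ ≤ (P[fun ω => ε ω ^ 2|mH]) ω ∧ (P[fun ω => ε ω ^ 2|mH]) ω ≤ c₂)
    (W T : Ω → ℝ) (Tstar : ℝ)
    (hW : W = fun ω => ((P[fun ω => ε ω ^ 2|mH]) ω)⁻¹)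
    (hT : T = P[W|mG]) (hTstar : Tstar = ∫ ω, (T ω)⁻¹ ∂P)
    (Λ2t : Set (Ω → EuclideanSpace ℝ (Fin p)))
    (hΛ2t : Λ2t = {g | ∃ Γs : Ω → EuclideanSpace ℝ (Fin p),
      StronglyMeasurable[mG] Γs ∧ Integrable Γs P ∧ (∫ ω, Γs ω ∂P) = 0 ∧
      MemLp g 2 P ∧ g = fun ω => (W ω * ε ω) • Γs ω})
    (Dst : Ω → EuclideanSpace ℝ (Fin p)) (hDst : StronglyMeasurable[mG] Dst)
    (hDst2 : MemLp Dst 2 P)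
    (Γs : Ω → EuclideanSpace ℝ (Fin p))
    (hΓs : Γs = fun ω => (T ω)⁻¹ • (Dst ω - Tstar⁻¹ • (∫ ω', (T ω')⁻¹ • Dst ω' ∂P))) :
    -- (i) Γ* is 𝒢-measurable with mean zero, and Γ*·W·ε ∈ Λ̃⁽²⁾
    (StronglyMeasurable[mG] Γs ∧ (∫ ω, Γs ω ∂P) = 0 ∧
      (fun ω => (W ω * ε ω) • Γs ω) ∈ Λ2t) ∧
    -- (ii) the residual identity
    ((fun ω => ((T ω)⁻¹ * (W ω * ε ω)) • Dst ω - (W ω * ε ω) • Γs ω) =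
      fun ω => ((Tstar * T ω)⁻¹ * (W ω * ε ω)) • (∫ ω', (T ω')⁻¹ • Dst ω' ∂P)) ∧
    -- (iii) the residual is orthogonal to Λ̃⁽²⁾
    (∀ h ∈ Λ2t,
      ∫ ω, ⟪((Tstar * T ω)⁻¹ * (W ω * ε ω)) • (∫ ω', (T ω')⁻¹ • Dst ω' ∂P), h ω⟫ ∂P
        = 0) ∧
    -- (iv) in particular, for a constant vector c
    (∀ cv : EuclideanSpace ℝ (Fin p),
      (fun ω => (W ω * ε ω) • cv - ((Tstar * T ω)⁻¹ * (W ω * ε ω)) • cv) ∈ Λ2t ∧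
      ∀ h ∈ Λ2t,
        ∫ ω, ⟪((Tstar * T ω)⁻¹ * (W ω * ε ω)) • cv, h ω⟫ ∂P = 0) := by
  have hGF : mG ≤ mΩ := hGH.trans hHF
  haveI : SigmaFinite (P.trim hHF) := (isFiniteMeasure_trim hHF).toSigmaFinite
  haveI : SigmaFinite (P.trim hGF) := (isFiniteMeasure_trim hGF).toSigmaFinite
  set X := P[fun ω => ε ω ^ 2|mH] with hX
  have hc₂ : 0 < c₂ := by obtain ⟨ω, h1, h2⟩ := hvar.exists; linarith
  have hXm : StronglyMeasurable[mH] X := stronglyMeasurable_condExp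
  have hWm : StronglyMeasurable[mH] W := by
    rw [hW]; exact hXm.measurable.inv.stronglyMeasurable
  have hWae : ∀ᵐ ω ∂P, c₂⁻¹ ≤ W ω ∧ W ω ≤ c₁⁻¹ ∧ W ω * X ω = 1 ∧ 0 < W ω := by
    filter_upwards [hvar] with ω h
    obtain ⟨h1, h2⟩ := h
    have hXpos : 0 < X ω := lt_of_lt_of_le hc₁ h1
    have hWdef : W ω = (X ω)⁻¹ := by rw [hW]
    exact ⟨by rw [hWdef]; exact inv_anti₀ hXpos h2,
      by rw [hWdef]; exact inv_anti₀ hc₁ h1,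
      by rw [hWdef]; exact inv_mul_cancel₀ (ne_of_gt hXpos),
      by rw [hWdef]; exact inv_pos.mpr hXpos⟩
  have hWint : Integrable W P := by
    refine (integrable_const c₁⁻¹).mono' (hWm.mono hHF).aestronglyMeasurable ?_
    filter_upwards [hWae] with ω h
    rw [Real.norm_of_nonneg h.2.2.2.le]; exact h.2.1
  have hTm : StronglyMeasurable[mG] T := by rw [hT]; exact stronglyMeasurable_condExp
  have hTae : ∀ᵐ ω ∂P, c₂⁻¹ ≤ T ω ∧ T ω ≤ c₁⁻¹ := by
    have hlow : (fun _ : Ω => c₂⁻¹) ≤ᵐ[P] W := by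
      filter_upwards [hWae] with ω h; exact h.1
    have hup : W ≤ᵐ[P] (fun _ : Ω => c₁⁻¹) := by
      filter_upwards [hWae] with ω h; exact h.2.1
    have h1 := condExp_mono (m := mG) (μ := P) (integrable_const _) hWint hlow
    have h2 := condExp_mono (m := mG) (μ := P) hWint (integrable_const _) hup
    rw [condExp_const hGF] at h1 h2
    rw [hT]
    filter_upwards [h1, h2] with ω h1 h2; exact ⟨h1, h2⟩
  have hTae' : ∀ᵐ ω ∂P, c₁ ≤ (T ω)⁻¹ ∧ (T ω)⁻¹ ≤ c₂ ∧ T ω * (T ω)⁻¹ = 1 ∧ 0 < T ω := by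
    filter_upwards [hTae] with ω h
    obtain ⟨h1, h2⟩ := h
    have hTpos : 0 < T ω := lt_of_lt_of_le (inv_pos.mpr hc₂) h1
    refine ⟨?_, ?_, mul_inv_cancel₀ (ne_of_gt hTpos), hTpos⟩
    · calc c₁ = (c₁⁻¹)⁻¹ := (inv_inv c₁).symm
        _ ≤ (T ω)⁻¹ := inv_anti₀ hTpos h2
    · calc (T ω)⁻¹ ≤ (c₂⁻¹)⁻¹ := inv_anti₀ (inv_pos.mpr hc₂) h1
        _ = c₂ := inv_inv c₂
  have hTinv_m : StronglyMeasurable[mG] (fun ω => (T ω)⁻¹) :=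
    hTm.measurable.inv.stronglyMeasurable
  have hTinv_int : Integrable (fun ω => (T ω)⁻¹) P := by
    refine (integrable_const c₂).mono' (hTinv_m.mono hGF).aestronglyMeasurable ?_
    filter_upwards [hTae'] with ω h
    rw [Real.norm_of_nonneg (le_trans hc₁.le h.1)]; exact h.2.1
  have hTstar_ge : c₁ ≤ Tstar := by
    rw [hTstar]
    calc c₁ = ∫ _, c₁ ∂P := by simp
      _ ≤ ∫ ω, (T ω)⁻¹ ∂P := by
          refine integral_mono_ae (integrable_const _) hTinv_int ?_
          filter_upwards [hTae'] with ω h; exact h.1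
  have hTstar_pos : 0 < Tstar := lt_of_lt_of_le hc₁ hTstar_ge
  set I : EuclideanSpace ℝ (Fin p) := ∫ ω', (T ω')⁻¹ • Dst ω' ∂P with hI
  have hWtop : MemLp W ⊤ P := by
    refine memLp_top_of_bound (hWm.mono hHF).aestronglyMeasurable c₁⁻¹ ?_
    filter_upwards [hWae] with ω h
    rw [Real.norm_of_nonneg h.2.2.2.le]; exact h.2.1
  have hTinv_top : MemLp (fun ω => (T ω)⁻¹) ⊤ P := by
    refine memLp_top_of_bound (hTinv_m.mono hGF).aestronglyMeasurable c₂ ?_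
    filter_upwards [hTae'] with ω h
    rw [Real.norm_of_nonneg (le_trans hc₁.le h.1)]; exact h.2.1
  have hWe2 : MemLp (fun ω => W ω * ε ω) 2 P := by
    have := MemLp.smul (r := 2) hWtop hε
    convert this using 1; funext ω; simp only [Pi.smul_apply, Pi.mul_apply, smul_eq_mul]; ring
  have hε2 : Integrable (fun ω => ε ω ^ 2) P := (memLp_two_iff_integrable_sq hε.1).mp hε
  have hWe2sq : Integrable (fun ω => (W ω * ε ω) ^ 2) P :=
    (memLp_two_iff_integrable_sq hWe2.1).mp hWe2
  have hcond2 : P[fun ω => (W ω * ε ω) ^ 2|mH] ≤ᵐ[P] fun _ => c₁⁻¹ := by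
    have heq : (fun ω => (W ω * ε ω) ^ 2) = (fun ω => W ω ^ 2) * (fun ω => ε ω ^ 2) := by
      funext ω; simp [mul_pow]
    have hpull := condExp_mul_of_stronglyMeasurable_left (m := mH) (μ := P)
      (f := fun ω => W ω ^ 2) (g := fun ω => ε ω ^ 2) (hWm.pow 2)
      (by rw [← heq]; exact hWe2sq) hε2
    rw [heq]
    filter_upwards [hpull, hWae] with ω hp h
    rw [hp]
    have hW2X : W ω ^ 2 * X ω = W ω := by
      rw [sq, mul_assoc, h.2.2.1, mul_one]
    have : ((fun ω => W ω ^ 2) * P[fun ω => ε ω ^ 2|mH]) ω = W ω := hW2X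
    rw [this]; exact h.2.1
  have hTinvDst2 : MemLp (fun ω => (T ω)⁻¹ • Dst ω) 2 P := MemLp.smul (r := 2) hDst2 hTinv_top
  have hTinvDst_int : Integrable (fun ω => (T ω)⁻¹ • Dst ω) P := hTinvDst2.integrable one_le_two
  have hΓm : StronglyMeasurable[mG] Γs := by
    rw [hΓs]
    exact hTinv_m.smul (hDst.sub stronglyMeasurable_const)
  have hΓ2 : MemLp Γs 2 P := by
    rw [hΓs]
    exact MemLp.smul (r := 2) (hDst2.sub (memLp_const (Tstar⁻¹ • I))) hTinv_top
  have hΓint : Integrable Γs P := hΓ2.integrable one_le_two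
  have hΓ0 : (∫ ω, Γs ω ∂P) = 0 := by
    have hsplit : Γs = fun ω => (T ω)⁻¹ • Dst ω - ((T ω)⁻¹ * Tstar⁻¹) • I := by
      rw [hΓs]; funext ω; rw [smul_sub, smul_smul]
    have hint2 : Integrable (fun ω => ((T ω)⁻¹ * Tstar⁻¹) • I) P :=
      (hTinv_int.mul_const Tstar⁻¹).smul_const I
    have hsm : (∫ ω, ((T ω)⁻¹ * Tstar⁻¹) • I ∂P) = (∫ ω, (T ω)⁻¹ * Tstar⁻¹ ∂P) • I :=
      my_integral_smul_const P _ I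
    have h1 : (∫ ω, (T ω)⁻¹ * Tstar⁻¹ ∂P) = 1 := by
      rw [integral_mul_const, ← hTstar, mul_inv_cancel₀ (ne_of_gt hTstar_pos)]
    rw [hsplit, integral_sub hTinvDst_int hint2, hsm, h1, one_smul, ← hI, sub_self]
  have hgL2 : MemLp (fun ω => (W ω * ε ω) • Γs ω) 2 P := by
    have hψm : StronglyMeasurable[mH] (fun ω => ‖Γs ω‖ ^ 2) :=
      ((hΓm.mono hGH).norm).pow 2
    have hψint : Integrable (fun ω => ‖Γs ω‖ ^ 2) P :=
      (memLp_two_iff_integrable_sq_norm hΓ2.1).mp hΓ2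
    have hmul := integrable_mul_of_condexp_le hHF hWe2sq
      (by filter_upwards with ω; positivity) hcond2 hψm (fun ω => by positivity) hψint
    have haesm : AEStronglyMeasurable[mΩ] (fun ω => (W ω * ε ω) • Γs ω) P :=
      (((hWm.mono hHF).aestronglyMeasurable).mul hε.1).smul
        (hΓm.mono hGF).aestronglyMeasurable
    refine (memLp_two_iff_integrable_sq_norm haesm).mpr ?_
    have heq : (fun ω => ‖(W ω * ε ω) • Γs ω‖ ^ 2) =
        fun ω => ‖Γs ω‖ ^ 2 * (W ω * ε ω) ^ 2 := by
      funext ω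
      rw [norm_smul, mul_pow, Real.norm_eq_abs, sq_abs, mul_comm]
    rw [heq]; exact hmul
  have hmem : (fun ω => (W ω * ε ω) • Γs ω) ∈ Λ2t := by
    rw [hΛ2t]; exact ⟨Γs, hΓm, hΓint, hΓ0, hgL2, rfl⟩
  have hii : (fun ω => ((T ω)⁻¹ * (W ω * ε ω)) • Dst ω - (W ω * ε ω) • Γs ω) =
      fun ω => ((Tstar * T ω)⁻¹ * (W ω * ε ω)) • I := by
    funext ω
    rw [hΓs]
    simp only [smul_sub, smul_smul, mul_inv]
    rw [show (W ω * ε ω) * (T ω)⁻¹ = (T ω)⁻¹ * (W ω * ε ω) from mul_comm _ _]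
    rw [sub_sub_cancel]
    congr 1
    ring
  -- orthogonality core
  have horto : ∀ v : EuclideanSpace ℝ (Fin p), ∀ h ∈ Λ2t,
      ∫ ω, ⟪((Tstar * T ω)⁻¹ * (W ω * ε ω)) • v, h ω⟫ ∂P = 0 := by
    intro v h hh
    rw [hΛ2t] at hh
    obtain ⟨Γ', hm', hint', hzero', hL2', rfl⟩ := hh
    set G : Ω → ℝ := fun ω => ⟪v, Γ' ω⟫ with hG
    have hG_SM : StronglyMeasurable[mG] G :=
      (innerSL ℝ v).continuous.comp_stronglyMeasurable hm'
    have hG_int : Integrable G P := by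
      refine (hint'.norm.const_mul ‖v‖).mono' (hG_SM.mono hGF).aestronglyMeasurable ?_
      filter_upwards with ω
      exact abs_real_inner_le_norm v (Γ' ω)
    have hG_bd : ∀ ω, |G ω| ≤ ‖v‖ * ‖Γ' ω‖ := fun ω => abs_real_inner_le_norm v (Γ' ω)
    set f₁ : Ω → ℝ := fun ω => (Tstar * T ω)⁻¹ * W ω ^ 2 * G ω with hf₁
    set f₂ : Ω → ℝ := fun ω => (Tstar * T ω)⁻¹ * G ω with hf₂
    have hTTm : StronglyMeasurable[mG] (fun ω => (Tstar * T ω)⁻¹) :=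
      (stronglyMeasurable_const.mul hTm).measurable.inv.stronglyMeasurable
    have hf₁m : StronglyMeasurable[mH] f₁ :=
      ((hTTm.mono hGH).mul (hWm.pow 2)).mul (hG_SM.mono hGH)
    have hf₂m : StronglyMeasurable[mG] f₂ := hTTm.mul hG_SM
    -- integrability of F = f₁ · ε²
    have hprod : Integrable (fun ω => ‖W ω * ε ω‖ * ‖(W ω * ε ω) • Γ' ω‖) P := by
      exact (MemLp.smul (r := 1) hL2'.norm hWe2.norm).integrable le_rfl
    have hF_int : Integrable (fun ω => f₁ ω * ε ω ^ 2) P := by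
      refine ((hprod.const_mul (Tstar⁻¹ * c₂ * ‖v‖)).mono'
        (((((hTTm.mono hGF).mul ((hWm.mono hHF).pow 2)).mul
          (hG_SM.mono hGF)).aestronglyMeasurable).mul (hε.1.pow 2)) ?_)
      filter_upwards [hTae', hWae] with ω hT' hW'
      have hTTpos : 0 < (Tstar * T ω)⁻¹ :=
        inv_pos.mpr (mul_pos hTstar_pos hT'.2.2.2)
      have hTTle : (Tstar * T ω)⁻¹ ≤ Tstar⁻¹ * c₂ := by
        rw [mul_inv]
        exact mul_le_mul_of_nonneg_left hT'.2.1 (inv_nonneg.mpr hTstar_pos.le)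
      have hkey : ‖W ω * ε ω‖ * ‖(W ω * ε ω) • Γ' ω‖ = (W ω * ε ω) ^ 2 * ‖Γ' ω‖ := by
        rw [norm_smul, Real.norm_eq_abs, ← mul_assoc, abs_mul_abs_self, sq]
      rw [Real.norm_eq_abs, hkey]
      calc |f₁ ω * ε ω ^ 2| = ((Tstar * T ω)⁻¹ * |G ω|) * (W ω ^ 2 * ε ω ^ 2) := by
            simp only [hf₁]
            rw [abs_mul, abs_mul, abs_mul, abs_of_pos hTTpos,
              abs_of_nonneg (sq_nonneg (W ω)), abs_of_nonneg (sq_nonneg (ε ω))]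
            ring
        _ ≤ ((Tstar⁻¹ * c₂) * (‖v‖ * ‖Γ' ω‖)) * (W ω ^ 2 * ε ω ^ 2) := by
            refine mul_le_mul_of_nonneg_right ?_ (by positivity)
            exact mul_le_mul hTTle (hG_bd ω) (abs_nonneg _) (by positivity)
        _ = Tstar⁻¹ * c₂ * ‖v‖ * ((W ω * ε ω) ^ 2 * ‖Γ' ω‖) := by
            rw [mul_pow]; ring
    -- the integrand equals f₁ · ε²
    have hinner : ∀ ω, ⟪((Tstar * T ω)⁻¹ * (W ω * ε ω)) • v, (W ω * ε ω) • Γ' ω⟫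
        = f₁ ω * ε ω ^ 2 := by
      intro ω
      rw [real_inner_smul_left, real_inner_smul_right, hf₁, hG]
      ring
    have hf₂W_int : Integrable (fun ω => f₂ ω * W ω) P := by
      refine (hG_int.norm.const_mul (Tstar⁻¹ * c₂ * c₁⁻¹)).mono'
        (((hf₂m.mono hGF).mul (hWm.mono hHF)).aestronglyMeasurable) ?_
      filter_upwards [hTae', hWae] with ω hT' hW'
      have hTTpos : 0 < (Tstar * T ω)⁻¹ :=
        inv_pos.mpr (mul_pos hTstar_pos hT'.2.2.2)
      have hTTle : (Tstar * T ω)⁻¹ ≤ Tstar⁻¹ * c₂ := by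
        rw [mul_inv]
        exact mul_le_mul_of_nonneg_left hT'.2.1 (inv_nonneg.mpr hTstar_pos.le)
      simp only [hf₂, Real.norm_eq_abs]
      rw [abs_mul, abs_mul, abs_of_pos hTTpos, abs_of_pos hW'.2.2.2]
      calc (Tstar * T ω)⁻¹ * |G ω| * W ω
          ≤ (Tstar⁻¹ * c₂) * |G ω| * c₁⁻¹ := by
            refine mul_le_mul (mul_le_mul_of_nonneg_right hTTle (abs_nonneg _))
              hW'.2.1 hW'.2.2.2.le (by positivity)
        _ = Tstar⁻¹ * c₂ * c₁⁻¹ * |G ω| := by ring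
    have hpull1 := condExp_mul_of_stronglyMeasurable_left (m := mH) (μ := P)
      (f := f₁) (g := fun ω => ε ω ^ 2) hf₁m hF_int hε2
    have hpull2 := condExp_mul_of_stronglyMeasurable_left (m := mG) (μ := P)
      (f := f₂) (g := W) hf₂m hf₂W_int hWint
    calc ∫ ω, ⟪((Tstar * T ω)⁻¹ * (W ω * ε ω)) • v, (W ω * ε ω) • Γ' ω⟫ ∂P
        = ∫ ω, f₁ ω * ε ω ^ 2 ∂P := integral_congr_ae (Filter.Eventually.of_forall hinner)
      _ = ∫ ω, (P[f₁ * fun ω => ε ω ^ 2|mH]) ω ∂P := (integral_condExp hHF).symm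
      _ = ∫ ω, f₂ ω * W ω ∂P := by
          refine integral_congr_ae ?_
          filter_upwards [hpull1, hWae] with ω hp hW'
          rw [hp]
          show f₁ ω * X ω = f₂ ω * W ω
          simp only [hf₁, hf₂]
          have : W ω ^ 2 * X ω = W ω := by rw [sq, mul_assoc, hW'.2.2.1, mul_one]
          calc (Tstar * T ω)⁻¹ * W ω ^ 2 * G ω * X ω
              = (Tstar * T ω)⁻¹ * G ω * (W ω ^ 2 * X ω) := by ring
            _ = (Tstar * T ω)⁻¹ * G ω * W ω := by rw [this]
      _ = ∫ ω, (P[f₂ * W|mG]) ω ∂P := (integral_condExp hGF).symm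
      _ = ∫ ω, Tstar⁻¹ * G ω ∂P := by
          refine integral_congr_ae ?_
          filter_upwards [hpull2, hTae'] with ω hp hT'
          rw [hp]
          show f₂ ω * (P[W|mG]) ω = Tstar⁻¹ * G ω
          simp only [← hT, hf₂, mul_inv]
          calc Tstar⁻¹ * (T ω)⁻¹ * G ω * T ω
              = Tstar⁻¹ * G ω * (T ω * (T ω)⁻¹) := by ring
            _ = Tstar⁻¹ * G ω := by rw [hT'.2.2.1, mul_one]
      _ = Tstar⁻¹ * ∫ ω, G ω ∂P := integral_const_mul _ _
      _ = 0 := by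
          rw [hG]
          simp only
          rw [integral_inner hint' v, hzero', inner_zero_right, mul_zero]
  -- part (iv) membership
  have hTT_int : Integrable (fun ω => (Tstar * T ω)⁻¹) P := by
    have := hTinv_int.const_mul Tstar⁻¹
    refine this.congr ?_
    filter_upwards with ω
    rw [mul_inv]
  have hTT_intval : (∫ ω, (Tstar * T ω)⁻¹ ∂P) = 1 := by
    have h1 : (∫ ω, (Tstar * T ω)⁻¹ ∂P) = ∫ ω, Tstar⁻¹ * (T ω)⁻¹ ∂P := by
      refine integral_congr_ae ?_
      filter_upwards with ω
      rw [mul_inv]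
    rw [h1, integral_const_mul, ← hTstar, inv_mul_cancel₀ (ne_of_gt hTstar_pos)]
  have hiv : ∀ cv : EuclideanSpace ℝ (Fin p),
      (fun ω => (W ω * ε ω) • cv - ((Tstar * T ω)⁻¹ * (W ω * ε ω)) • cv) ∈ Λ2t := by
    intro cv
    rw [hΛ2t]
    have hTTm : StronglyMeasurable[mG] (fun ω => (Tstar * T ω)⁻¹) :=
      (stronglyMeasurable_const.mul hTm).measurable.inv.stronglyMeasurable
    refine ⟨fun ω => (1 - (Tstar * T ω)⁻¹) • cv, ?_, ?_, ?_, ?_, ?_⟩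
    · exact (stronglyMeasurable_const.sub hTTm).smul stronglyMeasurable_const
    · exact ((integrable_const 1).sub hTT_int).smul_const cv
    · have hsm : (∫ ω, (1 - (Tstar * T ω)⁻¹) • cv ∂P)
          = (∫ ω, (1 - (Tstar * T ω)⁻¹) ∂P) • cv := my_integral_smul_const P _ cv
      rw [hsm, integral_sub (integrable_const 1) hTT_int, hTT_intval]
      simp
    · have h1 : (fun ω => (W ω * ε ω) • cv - ((Tstar * T ω)⁻¹ * (W ω * ε ω)) • cv) =
          fun ω => ((1 - (Tstar * T ω)⁻¹) * (W ω * ε ω)) • cv := by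
        funext ω
        rw [← sub_smul]
        congr 1
        ring
      rw [h1]
      have hTTtop : MemLp (fun ω => 1 - (Tstar * T ω)⁻¹) ⊤ P := by
        refine memLp_top_of_bound
          ((stronglyMeasurable_const.sub hTTm).mono hGF).aestronglyMeasurable
          (1 + Tstar⁻¹ * c₂) ?_
        filter_upwards [hTae'] with ω hT'
        have hTTpos : 0 < (Tstar * T ω)⁻¹ :=
          inv_pos.mpr (mul_pos hTstar_pos hT'.2.2.2)
        have hTTle : (Tstar * T ω)⁻¹ ≤ Tstar⁻¹ * c₂ := by
          rw [mul_inv]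
          exact mul_le_mul_of_nonneg_left hT'.2.1 (inv_nonneg.mpr hTstar_pos.le)
        rw [Real.norm_eq_abs, abs_sub_comm, abs_le]
        constructor <;> linarith
      have hφ2 : MemLp (fun ω => (1 - (Tstar * T ω)⁻¹) * (W ω * ε ω)) 2 P := by
        have := MemLp.smul (r := 2) hTTtop hWe2
        convert this using 1; funext ω; simp only [Pi.smul_apply, Pi.mul_apply, smul_eq_mul]; ring
      have hcv : MemLp (fun _ : Ω => cv) ⊤ P := memLp_top_const cv
      exact MemLp.smul (r := 2) hcv hφ2
    · funext ω
      rw [← sub_smul, smul_smul]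
      congr 1
      ring
  refine ⟨⟨hΓm, hΓ0, hmem⟩, hii, fun h hh => horto I h hh, fun cv => ⟨hiv cv, horto cv⟩⟩
end

section
/- (Equation (A4.4): projection onto the enlarged space Λ̂⁽²⁾.) Let Λ̂⁽²⁾ = {B·W·ε : B is 𝒢-measurable ℝ^p-valued with B·W·ε ∈ H}. For any ℋ-measurable ℝ^p-valued G with the required integrability, the element (G − E[G·W | 𝒢]·T⁻¹)·W·ε is orthogonal to every element of Λ̂⁽²⁾, and E[G·W | 𝒢]·T⁻¹·W·ε ∈ Λ̂⁽²⁾. Consequently, the orthogonal projection of G·W·ε onto Λ̂⁽²⁾ equals E[G·W | 𝒢]·T⁻¹·W·ε. -/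
open MeasureTheory
open scoped RealInnerProductSpace ENNReal


section Helpers

lemma memℒp_condexp_two {Ω E : Type*} [NormedAddCommGroup E] [InnerProductSpace ℝ E]
    [CompleteSpace E] {m mΩ : MeasurableSpace Ω} {P : Measure Ω} [IsProbabilityMeasure P]
    (hm : m ≤ mΩ) {f : Ω → E} (hf : MemLp f 2 P) :
    MemLp (P[f|m]) 2 P := by
  set fL := hf.toLp f with hfL
  set g : Lp E 2 P := ↑(condExpL2 E ℝ hm fL) with hg
  have hcl : (g : Ω → E) =ᵐ[P] P[f|m] := by
    refine ae_eq_condExp_of_forall_setIntegral_eq hm (hf.integrable one_le_two)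
      (fun s _ _ => ((Lp.memLp _).integrable one_le_two).integrableOn)
      (fun s hs hμs => ?_) (aestronglyMeasurable_condExpL2 hm fL)
    rw [hg, integral_condExpL2_eq hm fL hs hμs.ne]
    exact setIntegral_congr_ae (hm s hs) ((hf.coeFn_toLp).mono fun x hx _ => hx)
  exact (Lp.memLp _).ae_eq hcl

lemma integrable_inner_of_memℒp {Ω E : Type*} [NormedAddCommGroup E] [InnerProductSpace ℝ E]
    {mΩ : MeasurableSpace Ω} {P : Measure Ω}
    {f g : Ω → E} (hf : MemLp f 2 P) (hg : MemLp g 2 P) :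
    Integrable (fun ω => ⟪f ω, g ω⟫) P := by
  have h := MeasureTheory.L2.integrable_inner (𝕜 := ℝ) (hf.toLp f) (hg.toLp g)
  refine h.congr ?_
  filter_upwards [hf.coeFn_toLp, hg.coeFn_toLp] with ω h1 h2
  rw [h1, h2]

lemma lintegral_mul_weight {Ω : Type*} {m mΩ : MeasurableSpace Ω} {P : Measure Ω}
    [IsProbabilityMeasure P] (hm : m ≤ mΩ)
    {ε : Ω → ℝ} (hε : MemLp ε 2 P) {Y : Ω → ℝ≥0∞} (hY : Measurable[m] Y) :
    ∫⁻ ω, Y ω * ENNReal.ofReal (ε ω ^ 2) ∂P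
      = ∫⁻ ω, Y ω * ENNReal.ofReal ((P[fun ω => ε ω ^ 2|m]) ω) ∂P := by
  set κ := P[fun ω => ε ω ^ 2|m] with hκ
  have he2 : Integrable (fun ω => ε ω ^ 2) P := hε.integrable_sq
  have hd1 : AEMeasurable (fun ω => ENNReal.ofReal (ε ω ^ 2)) P :=
    ((hε.aestronglyMeasurable.aemeasurable.pow_const 2).ennreal_ofReal)
  have hd2m : Measurable[m] (fun ω => ENNReal.ofReal (κ ω)) :=
    (stronglyMeasurable_condExp.measurable).ennreal_ofReal
  have hd2 : Measurable (fun ω => ENNReal.ofReal (κ ω)) := hd2m.mono hm le_rfl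
  set ν₁ := P.withDensity (fun ω => ENNReal.ofReal (ε ω ^ 2)) with hν₁
  set ν₂ := P.withDensity (fun ω => ENNReal.ofReal (κ ω)) with hν₂
  have hset : ∀ s, MeasurableSet[m] s → ν₁ s = ν₂ s := by
    intro s hs
    rw [hν₁, hν₂, withDensity_apply _ (hm s hs), withDensity_apply _ (hm s hs)]
    have h1 : ∫⁻ ω in s, ENNReal.ofReal (ε ω ^ 2) ∂P = ENNReal.ofReal (∫ ω in s, ε ω ^ 2 ∂P) :=
      (ofReal_integral_eq_lintegral_ofReal he2.integrableOn
        (ae_restrict_of_ae (Filter.Eventually.of_forall fun ω => sq_nonneg _))).symm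
    have h2 : ∫⁻ ω in s, ENNReal.ofReal (κ ω) ∂P = ENNReal.ofReal (∫ ω in s, κ ω ∂P) :=
      (ofReal_integral_eq_lintegral_ofReal integrable_condExp.integrableOn
        (ae_restrict_of_ae (condExp_nonneg (Filter.Eventually.of_forall fun ω => sq_nonneg _)))).symm
    rw [h1, h2, hκ, setIntegral_condExp hm he2 hs]
  have htrim : ν₁.trim hm = ν₂.trim hm := by
    refine @Measure.ext Ω m _ _ fun s hs => ?_
    rw [trim_measurableSet_eq hm hs, trim_measurableSet_eq hm hs, hset s hs]
  calc ∫⁻ ω, Y ω * ENNReal.ofReal (ε ω ^ 2) ∂P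
      = ∫⁻ ω, Y ω ∂ν₁ := by
        rw [hν₁, lintegral_withDensity_eq_lintegral_mul₀ hd1 (hY.mono hm le_rfl).aemeasurable]
        simp_rw [Pi.mul_apply, mul_comm]
    _ = ∫⁻ ω, Y ω ∂(ν₁.trim hm) := (lintegral_trim hm hY).symm
    _ = ∫⁻ ω, Y ω ∂(ν₂.trim hm) := by rw [htrim]
    _ = ∫⁻ ω, Y ω ∂ν₂ := lintegral_trim hm hY
    _ = ∫⁻ ω, Y ω * ENNReal.ofReal (κ ω) ∂P := by
        rw [hν₂, lintegral_withDensity_eq_lintegral_mul₀ hd2.aemeasurable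
          (hY.mono hm le_rfl).aemeasurable]
        simp_rw [Pi.mul_apply, mul_comm]

lemma lintegral_ofReal_sq_norm_lt_top {Ω E : Type*} [NormedAddCommGroup E]
    {mΩ : MeasurableSpace Ω} {P : Measure Ω} {f : Ω → E} (hf : MemLp f 2 P) :
    ∫⁻ ω, ENNReal.ofReal (‖f ω‖ ^ 2) ∂P < ⊤ := by
  have h : Integrable (fun ω => ‖f ω‖ ^ 2) P :=
    (memLp_two_iff_integrable_sq_norm hf.aestronglyMeasurable).mp hf
  exact (hasFiniteIntegral_iff_ofReal
    (Filter.Eventually.of_forall fun ω => sq_nonneg (‖f ω‖))).mp h.2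

lemma memℒp_eps_smul {Ω E : Type*} [NormedAddCommGroup E] [InnerProductSpace ℝ E]
    {m mΩ : MeasurableSpace Ω} {P : Measure Ω} [IsProbabilityMeasure P]
    (hm : m ≤ mΩ) {ε : Ω → ℝ} (hε : MemLp ε 2 P) {c₂ : ℝ}
    (hub : ∀ᵐ ω ∂P, (P[fun ω => ε ω ^ 2|m]) ω ≤ c₂)
    {f : Ω → E} (hfm : StronglyMeasurable[m] f) (hf : MemLp f 2 P) :
    MemLp (fun ω => ε ω • f ω) 2 P := by
  have hsm : AEStronglyMeasurable (fun ω => ε ω • f ω) P :=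
    hε.aestronglyMeasurable.smul (hfm.mono hm).aestronglyMeasurable
  rw [memLp_two_iff_integrable_sq_norm hsm]
  have hY : Measurable[m] (fun ω => ENNReal.ofReal (‖f ω‖ ^ 2)) :=
    ((hfm.norm.measurable).pow_const 2).ennreal_ofReal
  have key : ∫⁻ ω, ENNReal.ofReal (‖ε ω • f ω‖ ^ 2) ∂P < ⊤ := by
    calc ∫⁻ ω, ENNReal.ofReal (‖ε ω • f ω‖ ^ 2) ∂P
        = ∫⁻ ω, ENNReal.ofReal (‖f ω‖ ^ 2) * ENNReal.ofReal (ε ω ^ 2) ∂P := by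
          refine lintegral_congr fun ω => ?_
          rw [← ENNReal.ofReal_mul (by positivity), norm_smul, Real.norm_eq_abs,
            mul_pow, sq_abs]
          ring_nf
      _ = ∫⁻ ω, ENNReal.ofReal (‖f ω‖ ^ 2) * ENNReal.ofReal ((P[fun ω => ε ω ^ 2|m]) ω) ∂P :=
          lintegral_mul_weight hm hε hY
      _ ≤ ∫⁻ ω, ENNReal.ofReal (‖f ω‖ ^ 2) * ENNReal.ofReal c₂ ∂P := by
          refine lintegral_mono_ae ?_
          filter_upwards [hub] with ω h
          exact mul_le_mul_right (ENNReal.ofReal_le_ofReal h) _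
      _ = (∫⁻ ω, ENNReal.ofReal (‖f ω‖ ^ 2) ∂P) * ENNReal.ofReal c₂ :=
          lintegral_mul_const'' _ (hY.mono hm le_rfl).aemeasurable
      _ < ⊤ := ENNReal.mul_lt_top (lintegral_ofReal_sq_norm_lt_top hf) ENNReal.ofReal_lt_top
  refine ⟨(hsm.norm.aemeasurable.pow_const 2).aestronglyMeasurable, ?_⟩
  rw [hasFiniteIntegral_iff_ofReal (Filter.Eventually.of_forall fun ω => sq_nonneg _)]
  exact key

lemma memℒp_of_eps_smul {Ω E : Type*} [NormedAddCommGroup E] [InnerProductSpace ℝ E]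
    {m mΩ : MeasurableSpace Ω} {P : Measure Ω} [IsProbabilityMeasure P]
    (hm : m ≤ mΩ) {ε : Ω → ℝ} (hε : MemLp ε 2 P) {c₁ : ℝ} (hc₁ : 0 < c₁)
    (hlb : ∀ᵐ ω ∂P, c₁ ≤ (P[fun ω => ε ω ^ 2|m]) ω)
    {f : Ω → E} (hfm : StronglyMeasurable[m] f)
    (hεf : MemLp (fun ω => ε ω • f ω) 2 P) : MemLp f 2 P := by
  have hfsm : AEStronglyMeasurable f P := (hfm.mono hm).aestronglyMeasurable
  rw [memLp_two_iff_integrable_sq_norm hfsm]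
  have hY : Measurable[m] (fun ω => ENNReal.ofReal (‖f ω‖ ^ 2)) :=
    ((hfm.norm.measurable).pow_const 2).ennreal_ofReal
  have key : ENNReal.ofReal c₁ * ∫⁻ ω, ENNReal.ofReal (‖f ω‖ ^ 2) ∂P < ⊤ := by
    calc ENNReal.ofReal c₁ * ∫⁻ ω, ENNReal.ofReal (‖f ω‖ ^ 2) ∂P
        = ∫⁻ ω, ENNReal.ofReal (‖f ω‖ ^ 2) * ENNReal.ofReal c₁ ∂P := by
          rw [lintegral_mul_const'' _ (hY.mono hm le_rfl).aemeasurable, mul_comm]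
      _ ≤ ∫⁻ ω, ENNReal.ofReal (‖f ω‖ ^ 2) * ENNReal.ofReal ((P[fun ω => ε ω ^ 2|m]) ω) ∂P := by
          refine lintegral_mono_ae ?_
          filter_upwards [hlb] with ω h
          exact mul_le_mul_right (ENNReal.ofReal_le_ofReal h) _
      _ = ∫⁻ ω, ENNReal.ofReal (‖f ω‖ ^ 2) * ENNReal.ofReal (ε ω ^ 2) ∂P :=
          (lintegral_mul_weight hm hε hY).symm
      _ = ∫⁻ ω, ENNReal.ofReal (‖ε ω • f ω‖ ^ 2) ∂P := by
          refine lintegral_congr fun ω => ?_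
          rw [← ENNReal.ofReal_mul (by positivity), norm_smul, Real.norm_eq_abs,
            mul_pow, sq_abs]
          ring_nf
      _ < ⊤ := lintegral_ofReal_sq_norm_lt_top hεf
  have hfin : ∫⁻ ω, ENNReal.ofReal (‖f ω‖ ^ 2) ∂P < ⊤ := by
    by_contra hcon
    rw [not_lt, top_le_iff] at hcon
    rw [hcon, ENNReal.mul_top (by simp [ENNReal.ofReal_eq_zero, not_le, hc₁])] at key
    exact (lt_irrefl _ key).elim
  refine ⟨(hfsm.norm.aemeasurable.pow_const 2).aestronglyMeasurable, ?_⟩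
  rw [hasFiniteIntegral_iff_ofReal (Filter.Eventually.of_forall fun ω => sq_nonneg _)]
  exact hfin

lemma integral_mul_eq_integral_mul_condexp {Ω : Type*} {m mΩ : MeasurableSpace Ω}
    {P : Measure Ω} [IsProbabilityMeasure P] (hm : m ≤ mΩ)
    {f g : Ω → ℝ} (hg : StronglyMeasurable[m] g)
    (hfg : Integrable (fun ω => g ω * f ω) P) (hf : Integrable f P) :
    ∫ ω, g ω * f ω ∂P = ∫ ω, g ω * (P[f|m]) ω ∂P := by
  have h : P[g * f|m] =ᵐ[P] g * P[f|m] := condExp_mul_of_stronglyMeasurable_left hg hfg hf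
  calc ∫ ω, g ω * f ω ∂P = ∫ ω, (P[g * f|m]) ω ∂P :=
        (integral_condExp (f := g * f) hm).symm
    _ = ∫ ω, g ω * (P[f|m]) ω ∂P := integral_congr_ae h

lemma condexp_euclidean_apply {Ω : Type*} {m mΩ : MeasurableSpace Ω}
    {P : Measure Ω} [IsProbabilityMeasure P] (hm : m ≤ mΩ)
    {p : ℕ} {f : Ω → EuclideanSpace ℝ (Fin p)} (hf : Integrable f P) (i : Fin p) :
    (fun ω => (P[f|m]) ω i) =ᵐ[P] P[fun ω => f ω i|m] := by
  have hfi : Integrable (fun ω => f ω i) P := by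
    have := (EuclideanSpace.proj (𝕜 := ℝ) i).integrable_comp hf
    simpa using this
  refine ae_eq_condExp_of_forall_setIntegral_eq hm hfi (fun s _ _ => ?_) (fun s hs hμs => ?_) ?_
  · refine Integrable.integrableOn ?_
    have := (EuclideanSpace.proj (𝕜 := ℝ) i).integrable_comp
      (integrable_condExp (μ := P) (m := m) (f := f))
    simpa using this
  · have h1 : ∫ ω in s, (P[f|m]) ω i ∂P
        = (EuclideanSpace.proj (𝕜 := ℝ) i) (∫ ω in s, (P[f|m]) ω ∂P) := by
      rw [← ContinuousLinearMap.integral_comp_comm _ integrable_condExp.integrableOn]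
      simp
    have h2 : ∫ ω in s, f ω i ∂P = (EuclideanSpace.proj (𝕜 := ℝ) i) (∫ ω in s, f ω ∂P) := by
      rw [← ContinuousLinearMap.integral_comp_comm _ hf.integrableOn]
      simp
    rw [h1, h2, setIntegral_condExp hm hf hs]
  · exact StronglyMeasurable.aestronglyMeasurable
      ((EuclideanSpace.proj (𝕜 := ℝ) i).continuous.comp_stronglyMeasurable
        stronglyMeasurable_condExp)

lemma memℒp_coord {Ω : Type*} {mΩ : MeasurableSpace Ω} {P : Measure Ω}
    {p : ℕ} {f : Ω → EuclideanSpace ℝ (Fin p)} (hf : MemLp f 2 P) (i : Fin p) :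
    MemLp (fun ω => f ω i) 2 P := by
  have := (EuclideanSpace.proj (𝕜 := ℝ) i).comp_memLp' hf
  exact this

lemma integral_euclidean_apply {Ω : Type*} {mΩ : MeasurableSpace Ω} {P : Measure Ω}
    {p : ℕ} {f : Ω → EuclideanSpace ℝ (Fin p)} (hf : Integrable f P) (i : Fin p) :
    (∫ ω, f ω ∂P) i = ∫ ω, f ω i ∂P := by
  have := (ContinuousLinearMap.integral_comp_comm (EuclideanSpace.proj (𝕜 := ℝ) i) hf).symm
  simpa using this

lemma euclidean_integral_eq_zero {Ω : Type*} {mΩ : MeasurableSpace Ω} {P : Measure Ω}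
    {p : ℕ} {f : Ω → EuclideanSpace ℝ (Fin p)} (hf : Integrable f P)
    (h : ∀ i, ∫ ω, f ω i ∂P = 0) : ∫ ω, f ω ∂P = 0 := by
  refine PiLp.ext fun i => ?_
  rw [integral_euclidean_apply hf i, h i]
  rfl

end Helpers


/-- equation (A4.4): the orthogonal projection of `G·W·ε` onto the
enlarged space `Λ̂⁽²⁾ = {B·W·ε : B 𝒢-measurable}` is `E[G·W | 𝒢]·T⁻¹·W·ε`:
the residual `(G − E[G·W | 𝒢]·T⁻¹)·W·ε` is orthogonal to `Λ̂⁽²⁾` and the candidate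
lies in `Λ̂⁽²⁾`. -/
theorem projection_onto_enlarged_Lambda2hat
    {Ω : Type*} {mΩ : MeasurableSpace Ω} (P : Measure Ω) [IsProbabilityMeasure P]
    {p : ℕ} {mG mH : MeasurableSpace Ω} (hGH : mG ≤ mH) (hHF : mH ≤ mΩ)
    (ε : Ω → ℝ) (hε : MemLp ε 2 P) (hεH : P[ε|mH] =ᵐ[P] 0)
    (c₁ c₂ : ℝ) (hc₁ : 0 < c₁)
    (hvar : ∀ᵐ ω ∂P, c₁ ≤ (P[fun ω => ε ω ^ 2|mH]) ω ∧ (P[fun ω => ε ω ^ 2|mH]) ω ≤ c₂)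
    (W T : Ω → ℝ)
    (hW : W = fun ω => ((P[fun ω => ε ω ^ 2|mH]) ω)⁻¹)
    (hT : T = P[W|mG])
    (Λ2h : Set (Ω → EuclideanSpace ℝ (Fin p)))
    (hΛ2h : Λ2h = {g | ∃ B : Ω → EuclideanSpace ℝ (Fin p),
      StronglyMeasurable[mG] B ∧ MemLp g 2 P ∧ (∫ ω, g ω ∂P) = 0 ∧
      g = fun ω => (W ω * ε ω) • B ω})
    (G : Ω → EuclideanSpace ℝ (Fin p)) (hG : StronglyMeasurable[mH] G)
    (hG2 : MemLp G 2 P)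
    (hGWε : MemLp (fun ω => (W ω * ε ω) • G ω) 2 P) :
    -- the residual is orthogonal to every element of Λ̂⁽²⁾
    (∀ h ∈ Λ2h,
      ∫ ω, ⟪(W ω * ε ω) • (G ω - (T ω)⁻¹ • (P[fun ω => W ω • G ω|mG]) ω), h ω⟫ ∂P
        = 0) ∧
    -- the candidate belongs to Λ̂⁽²⁾
    (fun ω => (W ω * ε ω) • ((T ω)⁻¹ • (P[fun ω => W ω • G ω|mG]) ω)) ∈ Λ2h := by
  have hGF : mG ≤ mΩ := hGH.trans hHF
  set κ := P[fun ω => ε ω ^ 2|mH] with hκdef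
  have hc₂ : 0 < c₂ := by
    obtain ⟨ω, h1, h2⟩ := hvar.exists
    linarith
  -- W facts
  have hWSM : StronglyMeasurable[mH] W := by
    rw [hW]; exact (stronglyMeasurable_condExp.measurable.inv).stronglyMeasurable
  have hWb : ∀ᵐ ω ∂P, c₂⁻¹ ≤ W ω ∧ W ω ≤ c₁⁻¹ ∧ W ω * κ ω = 1 ∧ 0 < W ω := by
    filter_upwards [hvar] with ω hω
    obtain ⟨h1, h2⟩ := hω
    have hκpos : 0 < κ ω := lt_of_lt_of_le hc₁ h1
    simp only [hW]
    exact ⟨inv_anti₀ hκpos h2, inv_anti₀ hc₁ h1,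
      inv_mul_cancel₀ (ne_of_gt hκpos), inv_pos.mpr hκpos⟩
  have hW2 : MemLp W 2 P := by
    refine MemLp.mono_exponent (memLp_top_of_bound
      ((hWSM.mono hHF).aestronglyMeasurable) c₁⁻¹ ?_) le_top
    filter_upwards [hWb] with ω hω
    rw [Real.norm_eq_abs, abs_of_pos hω.2.2.2]
    exact hω.2.1
  have hWi : Integrable W P := hW2.integrable one_le_two
  -- T facts
  have hTSM : StronglyMeasurable[mG] T := hT ▸ stronglyMeasurable_condExp
  have hTub : ∀ᵐ ω ∂P, T ω ≤ c₁⁻¹ := by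
    have h1 : P[W|mG] ≤ᵐ[P] P[(fun _ => c₁⁻¹)|mG] :=
      condExp_mono hWi (integrable_const _)
        (by filter_upwards [hWb] with ω hω; exact hω.2.1)
    rw [condExp_const hGF] at h1
    rw [hT]
    filter_upwards [h1] with ω hω using hω
  have hTlb : ∀ᵐ ω ∂P, c₂⁻¹ ≤ T ω := by
    have h1 : P[(fun _ => c₂⁻¹)|mG] ≤ᵐ[P] P[W|mG] :=
      condExp_mono (integrable_const _) hWi
        (by filter_upwards [hWb] with ω hω; exact hω.1)
    rw [condExp_const hGF] at h1
    rw [hT]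
    filter_upwards [h1] with ω hω using hω
  have hTb : ∀ᵐ ω ∂P, 0 < T ω ∧ T ω * (T ω)⁻¹ = 1 ∧ 0 ≤ (T ω)⁻¹ ∧ (T ω)⁻¹ ≤ c₂ := by
    filter_upwards [hTub, hTlb] with ω h1 h2
    have hpos : 0 < T ω := lt_of_lt_of_le (inv_pos.mpr hc₂) h2
    refine ⟨hpos, mul_inv_cancel₀ (ne_of_gt hpos), (inv_pos.mpr hpos).le, ?_⟩
    calc (T ω)⁻¹ ≤ (c₂⁻¹)⁻¹ := inv_anti₀ (inv_pos.mpr hc₂) h2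
      _ = c₂ := inv_inv c₂
  -- W • G ∈ L²
  have hWG2 : MemLp (fun ω => W ω • G ω) 2 P := by
    refine MemLp.of_le_mul (c := c₁⁻¹) hG2
      (((hWSM.mono hHF).aestronglyMeasurable).smul hG2.aestronglyMeasurable) ?_
    filter_upwards [hWb] with ω hω
    rw [norm_smul, Real.norm_eq_abs, abs_of_pos hω.2.2.2]
    exact mul_le_mul_of_nonneg_right hω.2.1 (norm_nonneg _)
  set F := P[fun ω => W ω • G ω|mG] with hFdef
  have hF2 : MemLp F 2 P := memℒp_condexp_two hGF hWG2
  have hFSM : StronglyMeasurable[mG] F := stronglyMeasurable_condExp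
  have hTinvSM : StronglyMeasurable[mG] (fun ω => (T ω)⁻¹) :=
    (hTSM.measurable.inv).stronglyMeasurable
  have hB₀SM : StronglyMeasurable[mG] (fun ω => (T ω)⁻¹ • F ω) := hTinvSM.smul hFSM
  have hB₀2 : MemLp (fun ω => (T ω)⁻¹ • F ω) 2 P := by
    refine MemLp.of_le_mul (c := c₂) hF2
      (((hTinvSM.mono hGF).aestronglyMeasurable).smul hF2.aestronglyMeasurable) ?_
    filter_upwards [hTb] with ω hω
    rw [norm_smul, Real.norm_eq_abs, abs_of_nonneg hω.2.2.1]
    exact mul_le_mul_of_nonneg_right hω.2.2.2 (norm_nonneg _)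
  -- the candidate is in L²
  have hf₀SM : StronglyMeasurable[mH] (fun ω => (W ω * (T ω)⁻¹) • F ω) :=
    (hWSM.mul ((hTinvSM).mono hGH)).smul (hFSM.mono hGH)
  have hf₀2 : MemLp (fun ω => (W ω * (T ω)⁻¹) • F ω) 2 P := by
    refine MemLp.of_le_mul (c := c₁⁻¹ * c₂) hF2
      ((hf₀SM.mono hHF).aestronglyMeasurable) ?_
    filter_upwards [hWb, hTb] with ω h1 h2
    rw [norm_smul, Real.norm_eq_abs, abs_mul, abs_of_pos h1.2.2.2, abs_of_nonneg h2.2.2.1]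
    exact mul_le_mul_of_nonneg_right
      (mul_le_mul h1.2.1 h2.2.2.2 h2.2.2.1 (inv_nonneg.mpr hc₁.le))
      (norm_nonneg (F ω))
  have hcandeq : (fun ω => (W ω * ε ω) • ((T ω)⁻¹ • F ω))
      = fun ω => ε ω • ((W ω * (T ω)⁻¹) • F ω) := by
    funext ω
    rw [smul_smul, smul_smul]
    congr 1
    ring
  have hub : ∀ᵐ ω ∂P, κ ω ≤ c₂ := by filter_upwards [hvar] with ω hω using hω.2
  have hlb : ∀ᵐ ω ∂P, c₁ ≤ κ ω := by filter_upwards [hvar] with ω hω using hω.1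
  have hcand2 : MemLp (fun ω => (W ω * ε ω) • ((T ω)⁻¹ • F ω)) 2 P := by
    rw [hcandeq]
    exact memℒp_eps_smul hHF hε hub hf₀SM hf₀2
  have hcandi : Integrable (fun ω => (W ω * ε ω) • ((T ω)⁻¹ • F ω)) P :=
    hcand2.integrable one_le_two
  -- the candidate has mean zero
  have hεi : Integrable ε P := hε.integrable one_le_two
  have hmean : (∫ ω, (W ω * ε ω) • ((T ω)⁻¹ • F ω) ∂P) = 0 := by
    refine euclidean_integral_eq_zero hcandi fun i => ?_
    have h2 : ∀ ω, ((W ω * ε ω) • ((T ω)⁻¹ • F ω) : EuclideanSpace ℝ (Fin p)) i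
        = (W ω * ((T ω)⁻¹ * F ω i)) * ε ω := by
      intro ω
      simp only [PiLp.smul_apply, smul_eq_mul]
      ring
    have hvSM : StronglyMeasurable[mH] (fun ω => W ω * ((T ω)⁻¹ * F ω i)) := by
      refine hWSM.mul (((hTinvSM.mul ?_)).mono hGH)
      exact ((EuclideanSpace.proj (𝕜 := ℝ) i).continuous.comp_stronglyMeasurable hFSM)
    have hvi : Integrable (fun ω => (W ω * ((T ω)⁻¹ * F ω i)) * ε ω) P := by
      have := (memℒp_coord hcand2 i).integrable one_le_two
      exact this.congr (Filter.Eventually.of_forall fun ω => h2 ω)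
    simp_rw [h2]
    rw [integral_mul_eq_integral_mul_condexp hHF hvSM hvi hεi]
    have : ∫ ω, (W ω * ((T ω)⁻¹ * F ω i)) * (P[ε|mH]) ω ∂P = ∫ (_ : Ω), (0 : ℝ) ∂P := by
      refine integral_congr_ae ?_
      filter_upwards [hεH] with ω hω
      rw [hω]
      simp
    rw [this]
    simp
  refine ⟨?_, ?_⟩
  · -- orthogonality
    intro h hh
    rw [hΛ2h] at hh
    obtain ⟨B, hBSM, hh2, _, hhB⟩ := hh
    rw [hhB] at hh2 ⊢
    -- B ∈ L²
    have hWBSM : StronglyMeasurable[mH] (fun ω => W ω • B ω) := hWSM.smul (hBSM.mono hGH)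
    have hWB2 : MemLp (fun ω => W ω • B ω) 2 P := by
      refine memℒp_of_eps_smul hHF hε hc₁ hlb hWBSM ?_
      refine MemLp.ae_eq (Filter.Eventually.of_forall fun ω => ?_) hh2
      show (W ω * ε ω) • B ω = ε ω • (W ω • B ω)
      rw [smul_smul]
      congr 1
      ring
    have hB2 : MemLp B 2 P := by
      refine MemLp.of_le_mul (c := c₂) hWB2 ((hBSM.mono hGF).aestronglyMeasurable) ?_
      filter_upwards [hWb] with ω hω
      rw [norm_smul, Real.norm_eq_abs, abs_of_pos hω.2.2.2, ← mul_assoc]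
      have h1 : (1 : ℝ) ≤ c₂ * W ω := by
        have := mul_le_mul_of_nonneg_left hω.1 hc₂.le
        rwa [mul_inv_cancel₀ (ne_of_gt hc₂)] at this
      nlinarith [norm_nonneg (B ω)]
    -- residual in L²
    have hWεR2 : MemLp (fun ω => (W ω * ε ω) • (G ω - (T ω)⁻¹ • F ω)) 2 P := by
      have := hGWε.sub hcand2
      exact MemLp.ae_eq (Filter.Eventually.of_forall fun ω =>
        (smul_sub (W ω * ε ω) (G ω) ((T ω)⁻¹ • F ω)).symm) this
    have hint1 : Integrable
        (fun ω => ⟪(W ω * ε ω) • (G ω - (T ω)⁻¹ • F ω), (W ω * ε ω) • B ω⟫) P :=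
      integrable_inner_of_memℒp hWεR2 hh2
    have hveq : ∀ ω, ⟪(W ω * ε ω) • (G ω - (T ω)⁻¹ • F ω), (W ω * ε ω) • B ω⟫
        = (W ω ^ 2 * ⟪G ω - (T ω)⁻¹ • F ω, B ω⟫) * ε ω ^ 2 := by
      intro ω
      rw [real_inner_smul_left, real_inner_smul_right]
      ring
    have hRBSM : StronglyMeasurable[mH] (fun ω => ⟪G ω - (T ω)⁻¹ • F ω, B ω⟫) :=
      (hG.sub (hB₀SM.mono hGH)).inner (hBSM.mono hGH)
    have hvSM : StronglyMeasurable[mH]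
        (fun ω => W ω ^ 2 * ⟪G ω - (T ω)⁻¹ • F ω, B ω⟫) :=
      (hWSM.pow 2).mul hRBSM
    have hvε2int : Integrable
        (fun ω => (W ω ^ 2 * ⟪G ω - (T ω)⁻¹ • F ω, B ω⟫) * ε ω ^ 2) P :=
      hint1.congr (Filter.Eventually.of_forall hveq)
    have hsq : Integrable (fun ω => ε ω ^ 2) P := hε.integrable_sq
    -- integrability of pieces
    have I1 : Integrable (fun ω => ⟪W ω • G ω, B ω⟫) P := integrable_inner_of_memℒp hWG2 hB2
    have I3 : Integrable (fun ω => ⟪F ω, B ω⟫) P := integrable_inner_of_memℒp hF2 hB2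
    have I2 : Integrable (fun ω => W ω * ((T ω)⁻¹ * ⟪F ω, B ω⟫)) P := by
      have hb : Integrable (fun ω => (W ω * (T ω)⁻¹) * ⟪F ω, B ω⟫) P := by
        refine Integrable.bdd_mul (c := c₁⁻¹ * c₂) I3
          ((hWSM.mul (hTinvSM.mono hGH)).mono hHF).aestronglyMeasurable ?_
        filter_upwards [hWb, hTb] with ω h1 h2
        rw [Real.norm_eq_abs, abs_mul, abs_of_pos h1.2.2.2, abs_of_nonneg h2.2.2.1]
        exact mul_le_mul h1.2.1 h2.2.2.2 h2.2.2.1 (inv_nonneg.mpr hc₁.le)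
      refine hb.congr (Filter.Eventually.of_forall fun ω => ?_)
      ring
    have I2' : Integrable (fun ω => ((T ω)⁻¹ * ⟪F ω, B ω⟫) * W ω) P := by
      refine I2.congr (Filter.Eventually.of_forall fun ω => ?_)
      ring
    -- step C : ∫ ⟪W•G, B⟫ = ∫ ⟪F, B⟫
    have hinner : ∀ (x y : EuclideanSpace ℝ (Fin p)), ⟪x, y⟫ = ∑ i, x i * y i := by
      intro x y
      simp [PiLp.inner_apply, RCLike.inner_apply, mul_comm]
    have hWGi : Integrable (fun ω => W ω • G ω) P := hWG2.integrable one_le_two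
    have coordint : ∀ (u v : Ω → EuclideanSpace ℝ (Fin p)), MemLp u 2 P → MemLp v 2 P →
        ∀ i : Fin p, Integrable (fun ω => u ω i * v ω i) P := by
      intro u v hu hv i
      have := integrable_inner_of_memℒp (memℒp_coord hu i) (memℒp_coord hv i)
      refine this.congr (Filter.Eventually.of_forall fun ω => ?_)
      simp [RCLike.inner_apply, mul_comm]
    have hC : ∫ ω, ⟪W ω • G ω, B ω⟫ ∂P = ∫ ω, ⟪F ω, B ω⟫ ∂P := by
      have e1 : ∀ ω, ⟪W ω • G ω, B ω⟫ = ∑ i, B ω i * (W ω • G ω) i := by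
        intro ω
        rw [hinner]
        exact Finset.sum_congr rfl fun i _ => mul_comm _ _
      have e2 : ∀ ω, ⟪F ω, B ω⟫ = ∑ i, B ω i * F ω i := by
        intro ω
        rw [hinner]
        exact Finset.sum_congr rfl fun i _ => mul_comm _ _
      simp_rw [e1, e2]
      rw [integral_finset_sum _ (fun i _ => coordint B _ hB2 hWG2 i),
        integral_finset_sum _ (fun i _ => coordint B F hB2 hF2 i)]
      refine Finset.sum_congr rfl fun i _ => ?_
      have hBiSM : StronglyMeasurable[mG] (fun ω => B ω i) :=
        (EuclideanSpace.proj (𝕜 := ℝ) i).continuous.comp_stronglyMeasurable hBSM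
      rw [integral_mul_eq_integral_mul_condexp hGF hBiSM (coordint B _ hB2 hWG2 i)
        ((memℒp_coord hWG2 i).integrable one_le_two)]
      refine integral_congr_ae ?_
      filter_upwards [condexp_euclidean_apply hGF hWGi i] with ω hω
      rw [← hω]
    -- step D : ∫ W * (T⁻¹ ⟪F,B⟫) = ∫ ⟪F,B⟫
    have hgSM : StronglyMeasurable[mG] (fun ω => (T ω)⁻¹ * ⟪F ω, B ω⟫) :=
      hTinvSM.mul (hFSM.inner hBSM)
    have hD : ∫ ω, W ω * ((T ω)⁻¹ * ⟪F ω, B ω⟫) ∂P = ∫ ω, ⟪F ω, B ω⟫ ∂P := by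
      have e0 : ∫ ω, W ω * ((T ω)⁻¹ * ⟪F ω, B ω⟫) ∂P
          = ∫ ω, ((T ω)⁻¹ * ⟪F ω, B ω⟫) * W ω ∂P := by
        refine integral_congr_ae (Filter.Eventually.of_forall fun ω => ?_)
        ring
      rw [e0, integral_mul_eq_integral_mul_condexp hGF hgSM I2' hWi]
      refine integral_congr_ae ?_
      filter_upwards [hTb] with ω hω
      rw [← hT]
      have hTT := hω.2.1
      linear_combination (⟪F ω, B ω⟫) * hTT
    -- put everything together
    have hae : (fun ω => (W ω ^ 2 * ⟪G ω - (T ω)⁻¹ • F ω, B ω⟫) * (κ ω))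
        =ᵐ[P] fun ω => ⟪W ω • G ω, B ω⟫ - W ω * ((T ω)⁻¹ * ⟪F ω, B ω⟫) := by
      filter_upwards [hWb] with ω hω
      have hWκ := hω.2.2.1
      simp only [inner_sub_left, real_inner_smul_left]
      linear_combination (W ω * (⟪G ω, B ω⟫ - (T ω)⁻¹ * ⟪F ω, B ω⟫)) * hWκ
    calc ∫ ω, ⟪(W ω * ε ω) • (G ω - (T ω)⁻¹ • F ω), (W ω * ε ω) • B ω⟫ ∂P
        = ∫ ω, (W ω ^ 2 * ⟪G ω - (T ω)⁻¹ • F ω, B ω⟫) * ε ω ^ 2 ∂P := by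
          simp_rw [hveq]
      _ = ∫ ω, (W ω ^ 2 * ⟪G ω - (T ω)⁻¹ • F ω, B ω⟫) * (κ ω) ∂P :=
          integral_mul_eq_integral_mul_condexp hHF hvSM hvε2int hsq
      _ = ∫ ω, (⟪W ω • G ω, B ω⟫ - W ω * ((T ω)⁻¹ * ⟪F ω, B ω⟫)) ∂P :=
          integral_congr_ae hae
      _ = (∫ ω, ⟪W ω • G ω, B ω⟫ ∂P) - ∫ ω, W ω * ((T ω)⁻¹ * ⟪F ω, B ω⟫) ∂P :=
          integral_sub I1 I2
      _ = 0 := by rw [hC, hD, sub_self]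
  · -- membership
    rw [hΛ2h]
    exact ⟨fun ω => (T ω)⁻¹ • F ω, hB₀SM, hcand2, hmean, rfl⟩
end

section
/- (Step 1 of Lemma S-A4.1.) Let B ∈ H and write Ḃ = B − E[B | ℋ] and R = E[B·ε | ℋ], assuming R·W·ε ∈ H. Then: (i) R·W·ε is orthogonal to every element of Λ⁽¹⁾; (ii) Ḃ − R·W·ε ∈ Λ⁽¹⁾, i.e., E[Ḃ − R·W·ε | ℋ] = 0 and E[(Ḃ − R·W·ε)·ε | ℋ] = 0 a.s. Consequently, the orthogonal projection of Ḃ onto the orthogonal complement of Λ⁽¹⁾ equals E[B·ε | ℋ]·W·ε. -/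
open MeasureTheory
open scoped RealInnerProductSpace

open scoped ENNReal

section helpers
variable {α : Type*} {m m0 : MeasurableSpace α} {μ : Measure α} [IsFiniteMeasure μ]

lemma my_integrable_smul_of_memℒp_two {E : Type*} [NormedAddCommGroup E] [NormedSpace ℝ E]
    {c : α → ℝ} {f : α → E} (hc : MemLp c 2 μ) (hf : MemLp f 2 μ) :
    Integrable (fun ω => c ω • f ω) μ :=
  (hf.smul hc (r := 1) (hpqr := ⟨by simp [ENNReal.inv_two_add_inv_two]⟩)).integrable le_rfl

lemma my_integrable_mul_of_memℒp_two {f g : α → ℝ} (hf : MemLp f 2 μ) (hg : MemLp g 2 μ) :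
    Integrable (fun ω => f ω * g ω) μ :=
  my_integrable_smul_of_memℒp_two hf hg

lemma my_memℒp_two_condexp {E : Type*} [NormedAddCommGroup E] [InnerProductSpace ℝ E]
    [CompleteSpace E] (hm : m ≤ m0) {f : α → E} (hf : MemLp f 2 μ) :
    MemLp (μ[f|m]) 2 μ := by
  have hfi : Integrable f μ := hf.integrable one_le_two
  set g : Lp E 2 μ := ((condExpL2 E ℝ hm (hf.toLp f) : lpMeas E ℝ m 2 μ) : Lp E 2 μ) with hgdef
  have hg : (g : α → E) =ᵐ[μ] μ[f|m] := by
    refine ae_eq_condExp_of_forall_setIntegral_eq hm hfi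
      (fun s hs hμs => ((Lp.memLp g).integrable one_le_two).integrableOn) ?_ ?_
    · intro s hs hμs
      rw [hgdef]
      rw [integral_condExpL2_eq hm (hf.toLp f) hs hμs.ne]
      exact setIntegral_congr_ae (hm s hs) ((hf.coeFn_toLp).mono fun x hx _ => hx)
    · rw [hgdef]
      exact lpMeas.aestronglyMeasurable _
  exact (Lp.memLp g).ae_eq hg

lemma my_condexp_apply {p : ℕ} (hm : m ≤ m0) {f : α → EuclideanSpace ℝ (Fin p)}
    (hf : Integrable f μ) (i : Fin p) :
    (fun ω => (μ[f|m]) ω i) =ᵐ[μ] μ[fun ω => f ω i|m] := by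
  refine ae_eq_condExp_of_forall_setIntegral_eq hm
    ((EuclideanSpace.proj (𝕜 := ℝ) i).integrable_comp hf) ?_ ?_ ?_
  · intro s hs hμs
    exact ((EuclideanSpace.proj (𝕜 := ℝ) i).integrable_comp integrable_condExp).integrableOn
  · intro s hs hμs
    have h1 := ContinuousLinearMap.integral_comp_comm (EuclideanSpace.proj (𝕜 := ℝ) i)
      (hf.integrableOn (s := s))
    have h2 := ContinuousLinearMap.integral_comp_comm (EuclideanSpace.proj (𝕜 := ℝ) i)
      ((integrable_condExp (μ := μ) (f := f) (m := m)).integrableOn (s := s))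
    simp only [PiLp.proj_apply] at h1 h2
    rw [h2, h1, setIntegral_condExp hm hf hs]
  · exact ((EuclideanSpace.proj (𝕜 := ℝ) i).continuous.comp_stronglyMeasurable
      stronglyMeasurable_condExp).aestronglyMeasurable
end helpers


/-- Step 1 of Lemma S-A4.1: for `B ∈ H`, writing
`Ḃ = B − E[B | ℋ]` and `R = E[B·ε | ℋ]`, (i) `R·W·ε` is orthogonal to every element of
`Λ⁽¹⁾`, and (ii) `Ḃ − R·W·ε ∈ Λ⁽¹⁾`; hence the projection of `Ḃ` onto `Λ⁽¹⁾^⊥` is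
`E[B·ε | ℋ]·W·ε`. -/
theorem projection_of_Bdot_onto_Lambda1_perp
    {Ω : Type*} {mΩ : MeasurableSpace Ω} (P : Measure Ω) [IsProbabilityMeasure P]
    {p : ℕ} {mG mH : MeasurableSpace Ω} (hGH : mG ≤ mH) (hHF : mH ≤ mΩ)
    (ε : Ω → ℝ) (hε : MemLp ε 2 P) (hεH : P[ε|mH] =ᵐ[P] 0)
    (c₁ c₂ : ℝ) (hc₁ : 0 < c₁)
    (hvar : ∀ᵐ ω ∂P, c₁ ≤ (P[fun ω => ε ω ^ 2|mH]) ω ∧ (P[fun ω => ε ω ^ 2|mH]) ω ≤ c₂)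
    (W : Ω → ℝ) (hW : W = fun ω => ((P[fun ω => ε ω ^ 2|mH]) ω)⁻¹)
    (Λ1 : Set (Ω → EuclideanSpace ℝ (Fin p)))
    (hΛ1 : Λ1 = {Γ | MemLp Γ 2 P ∧ (∫ ω, Γ ω ∂P) = 0 ∧
      P[Γ|mH] =ᵐ[P] 0 ∧ P[fun ω => ε ω • Γ ω|mH] =ᵐ[P] 0})
    (B : Ω → EuclideanSpace ℝ (Fin p)) (hB : MemLp B 2 P) (hB0 : (∫ ω, B ω ∂P) = 0)
    (Bdot R : Ω → EuclideanSpace ℝ (Fin p))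
    (hBdot : Bdot = fun ω => B ω - (P[B|mH]) ω)
    (hR : R = P[fun ω => ε ω • B ω|mH])
    (hRWε : MemLp (fun ω => (W ω * ε ω) • R ω) 2 P) :
    -- (i) R·W·ε ⟂ Λ⁽¹⁾
    (∀ h ∈ Λ1, ∫ ω, ⟪(W ω * ε ω) • R ω, h ω⟫ ∂P = 0) ∧
    -- (ii) Ḃ − R·W·ε ∈ Λ⁽¹⁾
    (fun ω => Bdot ω - (W ω * ε ω) • R ω) ∈ Λ1 := by
  -- pull-out property, in pointwise-mul form
  have pull : ∀ (f g : Ω → ℝ), StronglyMeasurable[mH] f →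
      Integrable (fun ω => f ω * g ω) P → Integrable g P →
      P[fun ω => f ω * g ω|mH] =ᵐ[P] fun ω => f ω * (P[g|mH]) ω := by
    intro f g hf hfg hg
    exact condExp_mul_of_stronglyMeasurable_left hf hfg hg
  -- basic integrability
  have hεint : Integrable ε P := hε.integrable one_le_two
  have hBint : Integrable B P := hB.integrable one_le_two
  have hε2int : Integrable (fun ω => ε ω ^ 2) P := by
    have := my_integrable_mul_of_memℒp_two hε hε
    simpa [pow_two] using this
  have hcB : MemLp (P[B|mH]) 2 P := my_memℒp_two_condexp hHF hB
  have hεBint : Integrable (fun ω => ε ω • B ω) P := my_integrable_smul_of_memℒp_two hε hB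
  have hWεRint : Integrable (fun ω => (W ω * ε ω) • R ω) P := hRWε.integrable one_le_two
  -- measurability
  have hWm : StronglyMeasurable[mH] W := by
    rw [hW]; exact (stronglyMeasurable_condExp.measurable.inv).stronglyMeasurable
  have hRm : StronglyMeasurable[mH] R := by rw [hR]; exact stronglyMeasurable_condExp
  have hRim : ∀ i : Fin p, StronglyMeasurable[mH] (fun ω => R ω i) := fun i =>
    (EuclideanSpace.proj (𝕜 := ℝ) i).continuous.comp_stronglyMeasurable hRm
  have hcBim : ∀ i : Fin p, StronglyMeasurable[mH] (fun ω => (P[B|mH]) ω i) := fun i =>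
    (EuclideanSpace.proj (𝕜 := ℝ) i).continuous.comp_stronglyMeasurable stronglyMeasurable_condExp
  have hWRim : ∀ i : Fin p, StronglyMeasurable[mH] (fun ω => W ω * R ω i) := fun i =>
    hWm.mul (hRim i)
  -- a.e. facts about W
  have hWE2 : ∀ᵐ ω ∂P, W ω * (P[fun ω => ε ω ^ 2|mH]) ω = 1 := by
    filter_upwards [hvar] with ω hω
    rw [hW]
    exact inv_mul_cancel₀ (by linarith [hω.1])
  -- componentwise memℒp
  have hBi : ∀ i : Fin p, MemLp (fun ω => B ω i) 2 P := fun i => by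
    have := (EuclideanSpace.proj (𝕜 := ℝ) i).comp_memLp' hB
    simpa [Function.comp_def] using this
  have hcBi : ∀ i : Fin p, MemLp (fun ω => (P[B|mH]) ω i) 2 P := fun i => by
    have := (EuclideanSpace.proj (𝕜 := ℝ) i).comp_memLp' hcB
    simpa [Function.comp_def] using this
  have hWεRi : ∀ i : Fin p, MemLp (fun ω => W ω * ε ω * R ω i) 2 P := fun i => by
    have := (EuclideanSpace.proj (𝕜 := ℝ) i).comp_memLp' hRWε
    simpa [Function.comp_def] using this
  -- claim A: E[ W ε R_i | H ] = 0
  have claimA : ∀ i : Fin p, P[fun ω => W ω * ε ω * R ω i|mH] =ᵐ[P] 0 := by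
    intro i
    have he : (fun ω => W ω * ε ω * R ω i) = fun ω => (W ω * R ω i) * ε ω := by
      funext ω; ring
    rw [he]
    have hint : Integrable (fun ω => (W ω * R ω i) * ε ω) P := by
      rw [← he]; exact (hWεRi i).integrable one_le_two
    refine (pull _ _ (hWRim i) hint hεint).trans ?_
    filter_upwards [hεH] with ω h0
    simp [h0]
  -- claim B: E[ ε · (W ε R_i) | H ] = R_i
  have claimB : ∀ i : Fin p,
      P[fun ω => ε ω * (W ω * ε ω * R ω i)|mH] =ᵐ[P] fun ω => R ω i := by
    intro i
    have he : (fun ω => ε ω * (W ω * ε ω * R ω i)) = fun ω => (W ω * R ω i) * ε ω ^ 2 := by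
      funext ω; ring
    rw [he]
    have hint : Integrable (fun ω => (W ω * R ω i) * ε ω ^ 2) P := by
      rw [← he]; exact my_integrable_mul_of_memℒp_two hε (hWεRi i)
    refine (pull _ _ (hWRim i) hint hε2int).trans ?_
    filter_upwards [hWE2] with ω h1
    linear_combination (R ω i) * h1
  -- claim C: E[ ε · (E[B|H])_i | H ] = 0
  have claimC : ∀ i : Fin p, P[fun ω => ε ω * (P[B|mH]) ω i|mH] =ᵐ[P] 0 := by
    intro i
    have he : (fun ω => ε ω * (P[B|mH]) ω i) = fun ω => ((P[B|mH]) ω i) * ε ω := by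
      funext ω; ring
    rw [he]
    have hint : Integrable (fun ω => ((P[B|mH]) ω i) * ε ω) P :=
      my_integrable_mul_of_memℒp_two (hcBi i) hε
    refine (pull _ _ (hcBim i) hint hεint).trans ?_
    filter_upwards [hεH] with ω h0
    simp [h0]
  -- claim D: E[ ε B_i | H ] = R_i
  have claimD : ∀ i : Fin p, P[fun ω => ε ω * B ω i|mH] =ᵐ[P] fun ω => R ω i := by
    intro i
    have h := my_condexp_apply hHF hεBint i
    rw [hR]
    exact h.symm
  -- E[WεR | H] = 0 (vector form)
  have hcondWεR : P[fun ω => (W ω * ε ω) • R ω|mH] =ᵐ[P] 0 := by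
    have hall : ∀ᵐ ω ∂P, ∀ i : Fin p,
        (P[fun ω => (W ω * ε ω) • R ω|mH]) ω i = 0 := by
      rw [ae_all_iff]
      intro i
      have h1 := my_condexp_apply hHF hWεRint i
      have h2 := claimA i
      filter_upwards [h1, h2] with ω e1 e2
      rw [e1]; exact e2
    filter_upwards [hall] with ω hω
    ext i
    simpa using hω i
  constructor
  · -- part (i)
    intro h hh
    rw [hΛ1] at hh
    obtain ⟨hh2, -, -, hhε⟩ := hh
    have hhi : ∀ i : Fin p, MemLp (fun ω => h ω i) 2 P := fun i => by
      have := (EuclideanSpace.proj (𝕜 := ℝ) i).comp_memLp' hh2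
      simpa [Function.comp_def] using this
    have hεhint : Integrable (fun ω => ε ω • h ω) P := my_integrable_smul_of_memℒp_two hε hh2
    have hεhi0 : ∀ i : Fin p, P[fun ω => ε ω * h ω i|mH] =ᵐ[P] 0 := by
      intro i
      have h1 := my_condexp_apply hHF hεhint i
      refine h1.symm.trans ?_
      filter_upwards [hhε] with ω e1
      rw [e1]; rfl
    have hterm : ∀ i : Fin p, ∫ ω, (W ω * ε ω * R ω i) * h ω i ∂P = 0 := by
      intro i
      have he : (fun ω => (W ω * ε ω * R ω i) * h ω i)
          = fun ω => (W ω * R ω i) * (ε ω * h ω i) := by funext ω; ring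
      have hint : Integrable (fun ω => (W ω * ε ω * R ω i) * h ω i) P :=
        my_integrable_mul_of_memℒp_two (hWεRi i) (hhi i)
      have hint2 : Integrable (fun ω => ε ω * h ω i) P :=
        my_integrable_mul_of_memℒp_two hε (hhi i)
      have hpull := pull _ _ (hWRim i) (he ▸ hint) hint2
      have hcond0 : P[fun ω => (W ω * ε ω * R ω i) * h ω i|mH] =ᵐ[P] 0 := by
        rw [he]
        refine hpull.trans ?_
        filter_upwards [hεhi0 i] with ω e1
        simp only [Pi.zero_apply] at e1 ⊢
        rw [e1]; ring
      calc ∫ ω, (W ω * ε ω * R ω i) * h ω i ∂P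
          = ∫ ω, (P[fun ω => (W ω * ε ω * R ω i) * h ω i|mH]) ω ∂P :=
            (integral_condExp hHF).symm
        _ = 0 := by rw [integral_congr_ae hcond0]; simp
    have hinner : ∀ ω, ⟪(W ω * ε ω) • R ω, h ω⟫ = ∑ i, (W ω * ε ω * R ω i) * h ω i := by
      intro ω
      simp [PiLp.inner_apply, RCLike.inner_apply, PiLp.smul_apply, smul_eq_mul]
      exact Finset.sum_congr rfl (fun i _ => mul_comm _ _)
    calc ∫ ω, ⟪(W ω * ε ω) • R ω, h ω⟫ ∂P
        = ∫ ω, ∑ i, (W ω * ε ω * R ω i) * h ω i ∂P := by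
          exact integral_congr_ae (Filter.Eventually.of_forall fun ω => hinner ω)
      _ = ∑ i, ∫ ω, (W ω * ε ω * R ω i) * h ω i ∂P :=
          integral_finset_sum _ (fun i _ => my_integrable_mul_of_memℒp_two (hWεRi i) (hhi i))
      _ = 0 := by simp [hterm]
  · -- part (ii)
    rw [hΛ1]
    have hBdotmem : MemLp Bdot 2 P := by rw [hBdot]; exact hB.sub hcB
    have hBdotint : Integrable Bdot P := hBdotmem.integrable one_le_two
    have hFmem : MemLp (fun ω => Bdot ω - (W ω * ε ω) • R ω) 2 P := hBdotmem.sub hRWε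
    have hFint : Integrable (fun ω => Bdot ω - (W ω * ε ω) • R ω) P :=
      hFmem.integrable one_le_two
    have hcondBdot : P[Bdot|mH] =ᵐ[P] 0 := by
      rw [hBdot]
      refine (condExp_sub hBint integrable_condExp mH).trans ?_
      rw [condExp_of_stronglyMeasurable hHF stronglyMeasurable_condExp integrable_condExp]
      simp
    refine ⟨hFmem, ?_, ?_, ?_⟩
    · -- integral zero
      rw [integral_sub hBdotint hWεRint]
      have h1 : ∫ ω, Bdot ω ∂P = 0 := by
        rw [hBdot, integral_sub hBint integrable_condExp, integral_condExp hHF, hB0,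
          sub_self]
      have h2 : ∫ ω, (W ω * ε ω) • R ω ∂P = 0 := by
        rw [← integral_condExp hHF, integral_congr_ae hcondWεR]
        simp
      rw [h1, h2, sub_self]
    · -- condexp zero
      refine (condExp_sub hBdotint hWεRint mH).trans ?_
      filter_upwards [hcondBdot, hcondWεR] with ω e1 e2
      simp [e1, e2]
    · -- condexp of ε • F zero
      have hεFint : Integrable (fun ω => ε ω • (Bdot ω - (W ω * ε ω) • R ω)) P :=
        my_integrable_smul_of_memℒp_two hε hFmem
      have hcomp : ∀ i : Fin p,
          P[fun ω => ε ω * (Bdot ω - (W ω * ε ω) • R ω) i|mH] =ᵐ[P] 0 := by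
        intro i
        have he : (fun ω => ε ω * (Bdot ω - (W ω * ε ω) • R ω) i)
            = fun ω => (fun ω => ε ω * B ω i - ε ω * (P[B|mH]) ω i) ω
                - (fun ω => ε ω * (W ω * ε ω * R ω i)) ω := by
          funext ω
          rw [hBdot]
          simp [PiLp.sub_apply, PiLp.smul_apply, smul_eq_mul]
          ring
        rw [he]
        have hg1 : Integrable (fun ω => ε ω * B ω i) P :=
          my_integrable_mul_of_memℒp_two hε (hBi i)
        have hg2 : Integrable (fun ω => ε ω * (P[B|mH]) ω i) P :=
          my_integrable_mul_of_memℒp_two hε (hcBi i)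
        have hg3 : Integrable (fun ω => ε ω * (W ω * ε ω * R ω i)) P :=
          my_integrable_mul_of_memℒp_two hε (hWεRi i)
        have h12 : Integrable (fun ω => ε ω * B ω i - ε ω * (P[B|mH]) ω i) P := hg1.sub hg2
        refine (condExp_sub h12 hg3 mH).trans ?_
        have hsub12 : P[fun ω => ε ω * B ω i - ε ω * (P[B|mH]) ω i|mH]
            =ᵐ[P] fun ω => R ω i := by
          refine (condExp_sub hg1 hg2 mH).trans ?_
          filter_upwards [claimD i, claimC i] with ω e1 e2
          simp only [Pi.sub_apply, e1, e2, Pi.zero_apply, sub_zero]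
        filter_upwards [hsub12, claimB i] with ω e1 e2
        simp only [Pi.sub_apply, e1, e2, Pi.zero_apply, sub_self]
      have hall : ∀ᵐ ω ∂P, ∀ i : Fin p,
          (P[fun ω => ε ω • (Bdot ω - (W ω * ε ω) • R ω)|mH]) ω i = 0 := by
        rw [ae_all_iff]
        intro i
        have h1 := my_condexp_apply hHF hεFint i
        filter_upwards [h1, hcomp i] with ω e1 e2
        rw [e1]; exact e2
      filter_upwards [hall] with ω hω
      ext i
      simpa using hω i
end

section
/- (Lemma S-(A4.2a): projection onto the complement of Λ̃⁽³⁾.) Let D be a 𝒢-measurable ℝ^p-valued random variable with E[D] = 0 and the required integrability, and set V₀ = E[ε₀²] and b = E[Q·D]/V₀ ∈ ℝ^p. Then: (i) V₀ = T* + E[Q²]; (ii) ε₀ is orthogonal to every element of Λ̃⁽³⁾, i.e., E[ε₀ · (Γ* − E[Q·Γ*]·(T*·T)⁻¹·W·ε)] = 0 (componentwise) for every 𝒢-measurable ℝ^p-valued Γ* with E[Γ*] = 0; (iii) D − b·ε₀ ∈ Λ̃⁽³⁾ (realized by Γ* = D − b·Q). Consequently, the orthogonal projection of D onto the orthogonal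 complement of Λ̃⁽³⁾ equals E[Q·D]·V₀⁻¹·ε₀. -/
open MeasureTheory
open scoped RealInnerProductSpace ENNReal

/-- Auxiliary: `integral_smul_const` with the measurable-space instance made explicit,
to avoid instance-resolution picking up sub-σ-algebras from the local context. -/
lemma integral_smul_const' {Ω : Type*} (m : MeasurableSpace Ω) (P : @Measure Ω m)
    {E : Type*} [NormedAddCommGroup E] [NormedSpace ℝ E] [CompleteSpace E]
    (f : Ω → ℝ) (c : E) : ∫ ω, f ω • c ∂P = (∫ ω, f ω ∂P) • c :=
  integral_smul_const f c

/-- Lemma S-(A4.2a): with `V₀ = E[ε₀²]` and `b = E[Q·D]/V₀`,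
(i) `V₀ = T* + E[Q²]`; (ii) `ε₀` is orthogonal (componentwise) to every element of
`Λ̃⁽³⁾`; (iii) `D − b·ε₀ ∈ Λ̃⁽³⁾`; hence the projection of `D` onto `Λ̃⁽³⁾^⊥` is
`E[Q·D]·V₀⁻¹·ε₀`. -/
theorem projection_onto_Lambda3tilde_perp
    {Ω : Type*} {mΩ : MeasurableSpace Ω} (P : Measure Ω) [IsProbabilityMeasure P]
    {p : ℕ} {mG mH : MeasurableSpace Ω} (hGH : mG ≤ mH) (hHF : mH ≤ mΩ)
    (ε : Ω → ℝ) (hε : MemLp ε 2 P) (hεH : P[ε|mH] =ᵐ[P] 0)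
    (c₁ c₂ : ℝ) (hc₁ : 0 < c₁)
    (hvar : ∀ᵐ ω ∂P, c₁ ≤ (P[fun ω => ε ω ^ 2|mH]) ω ∧ (P[fun ω => ε ω ^ 2|mH]) ω ≤ c₂)
    (Q : Ω → ℝ) (hQmeas : StronglyMeasurable[mG] Q) (hQ2 : MemLp Q 2 P)
    (hQ0 : ∫ ω, Q ω ∂P = 0)
    (W T : Ω → ℝ) (Tstar : ℝ) (ε₀ : Ω → ℝ)
    (hW : W = fun ω => ((P[fun ω => ε ω ^ 2|mH]) ω)⁻¹)
    (hT : T = P[W|mG]) (hTstar : Tstar = ∫ ω, (T ω)⁻¹ ∂P)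
    (hε₀ : ε₀ = fun ω => (T ω)⁻¹ * W ω * ε ω + Q ω)
    (Λ3t : Set (Ω → EuclideanSpace ℝ (Fin p)))
    (hΛ3t : Λ3t = {g | ∃ Γs : Ω → EuclideanSpace ℝ (Fin p),
      StronglyMeasurable[mG] Γs ∧ MemLp Γs 2 P ∧ (∫ ω, Γs ω ∂P) = 0 ∧
      MemLp g 2 P ∧
      g = fun ω => Γs ω - ((Tstar * T ω)⁻¹ * (W ω * ε ω)) • (∫ ω', Q ω' • Γs ω' ∂P)})
    (D : Ω → EuclideanSpace ℝ (Fin p)) (hD : StronglyMeasurable[mG] D)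
    (hD2 : MemLp D 2 P) (hD0 : (∫ ω, D ω ∂P) = 0)
    (V₀ : ℝ) (hV₀ : V₀ = ∫ ω, ε₀ ω ^ 2 ∂P)
    (b : EuclideanSpace ℝ (Fin p)) (hb : b = V₀⁻¹ • ∫ ω, Q ω • D ω ∂P) :
    -- (i) V₀ = T* + E[Q²]
    (V₀ = Tstar + ∫ ω, Q ω ^ 2 ∂P) ∧
    -- (ii) ε₀ is orthogonal (componentwise) to every element of Λ̃⁽³⁾
    (∀ g ∈ Λ3t, (∫ ω, ε₀ ω • g ω ∂P) = (0 : EuclideanSpace ℝ (Fin p))) ∧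
    -- (iii) D − b·ε₀ ∈ Λ̃⁽³⁾
    (fun ω => D ω - ε₀ ω • b) ∈ Λ3t := by
  have hmGF : mG ≤ mΩ := hGH.trans hHF
  set σ2 := P[fun ω => ε ω ^ 2|mH] with hσ2
  -- c₂ is positive
  have hc₂ : 0 < c₂ := by
    obtain ⟨ω, h1, h2⟩ := hvar.exists
    exact lt_of_lt_of_le hc₁ (h1.trans h2)
  -- integrability of ε and ε²
  have hεint : Integrable ε P := hε.integrable one_le_two
  have mulInt : ∀ (f g : Ω → ℝ), MemLp f 2 P → MemLp g 2 P →
      Integrable (fun ω => f ω * g ω) P := by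
    intro f g hf hg
    have h := (hg.smul (r := 1) hf)
    exact (memLp_one_iff_integrable.mp h)
  have smulInt : ∀ (φ : Ω → ℝ) (f : Ω → EuclideanSpace ℝ (Fin p)), MemLp φ 2 P →
      MemLp f 2 P → Integrable (fun ω => φ ω • f ω) P := by
    intro φ f hφ hf
    have h := (hf.smul (r := 1) hφ)
    exact (memLp_one_iff_integrable.mp h)
  have hε2int : Integrable (fun ω => ε ω ^ 2) P :=
    (mulInt ε ε hε hε).congr (ae_of_all _ fun ω => (pow_two (ε ω)).symm)
  -- a.e. facts about W
  have hWae : ∀ᵐ ω ∂P, (c₂⁻¹ ≤ W ω ∧ W ω ≤ c₁⁻¹) ∧ W ω * σ2 ω = 1 := by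
    filter_upwards [hvar] with ω hω
    have h1 : 0 < σ2 ω := lt_of_lt_of_le hc₁ hω.1
    simp only [hW]
    refine ⟨⟨?_, ?_⟩, inv_mul_cancel₀ (ne_of_gt h1)⟩
    · exact inv_anti₀ h1 hω.2
    · exact inv_anti₀ hc₁ hω.1
  have hWmeasH : StronglyMeasurable[mH] W := by
    rw [hW]; exact stronglyMeasurable_condExp.measurable.inv.stronglyMeasurable
  have hWaesm : AEStronglyMeasurable[mΩ] W P := (hWmeasH.mono hHF).aestronglyMeasurable
  have hWbdd : ∀ᵐ ω ∂P, ‖W ω‖ ≤ c₁⁻¹ := by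
    filter_upwards [hWae] with ω h
    rw [Real.norm_eq_abs, abs_of_nonneg (le_trans (inv_nonneg.mpr hc₂.le) h.1.1)]
    exact h.1.2
  have hWint : Integrable W P := Integrable.mono' (integrable_const c₁⁻¹) hWaesm hWbdd
  -- facts about T
  have hTmeasG : StronglyMeasurable[mG] T := by rw [hT]; exact stronglyMeasurable_condExp
  have hTlow : ∀ᵐ ω ∂P, c₂⁻¹ ≤ T ω := by
    have h := condExp_mono (m := mG) (μ := P) (integrable_const c₂⁻¹) hWint
      (hWae.mono fun ω h => h.1.1)
    rw [condExp_const hmGF] at h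
    rw [hT]
    filter_upwards [h] with ω hω using hω
  have hThigh : ∀ᵐ ω ∂P, T ω ≤ c₁⁻¹ := by
    have h := condExp_mono (m := mG) (μ := P) hWint (integrable_const c₁⁻¹)
      (hWae.mono fun ω h => h.1.2)
    rw [condExp_const hmGF] at h
    rw [hT]
    filter_upwards [h] with ω hω using hω
  have hTpos : ∀ᵐ ω ∂P, 0 < T ω :=
    hTlow.mono fun ω h => lt_of_lt_of_le (inv_pos.mpr hc₂) h
  -- T⁻¹ facts
  have hTinvae : ∀ᵐ ω ∂P, c₁ ≤ (T ω)⁻¹ ∧ (T ω)⁻¹ ≤ c₂ := by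
    filter_upwards [hTlow, hThigh, hTpos] with ω h1 h2 h3
    constructor
    · calc c₁ = (c₁⁻¹)⁻¹ := (inv_inv c₁).symm
        _ ≤ (T ω)⁻¹ := inv_anti₀ h3 h2
    · calc (T ω)⁻¹ ≤ (c₂⁻¹)⁻¹ := inv_anti₀ (inv_pos.mpr hc₂) h1
        _ = c₂ := inv_inv c₂
  have hTinvint : Integrable (fun ω => (T ω)⁻¹) P := by
    refine Integrable.mono' (integrable_const c₂)
      ((hTmeasG.mono hmGF).measurable.inv.stronglyMeasurable.aestronglyMeasurable) ?_
    filter_upwards [hTinvae] with ω h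
    rw [Real.norm_eq_abs, abs_of_nonneg (le_trans hc₁.le h.1)]
    exact h.2
  have hTstar_ge : c₁ ≤ Tstar := by
    rw [hTstar]
    calc c₁ = ∫ _, c₁ ∂P := by simp
      _ ≤ ∫ ω, (T ω)⁻¹ ∂P :=
        integral_mono_ae (integrable_const c₁) hTinvint (hTinvae.mono fun ω h => h.1)
  have hTstar_pos : 0 < Tstar := lt_of_lt_of_le hc₁ hTstar_ge
  -- the function B = T⁻¹ W
  set B : Ω → ℝ := fun ω => (T ω)⁻¹ * W ω with hB
  have hBmeasH : StronglyMeasurable[mH] B := ((hTmeasG.mono hGH).measurable.inv.stronglyMeasurable).mul hWmeasH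
  have hBaesm : AEStronglyMeasurable[mΩ] B P := (hBmeasH.mono hHF).aestronglyMeasurable
  have hBbdd : ∀ᵐ ω ∂P, ‖B ω‖ ≤ c₂ * c₁⁻¹ := by
    filter_upwards [hTinvae, hWae] with ω h1 h2
    have hW0 : 0 ≤ W ω := le_trans (inv_nonneg.mpr hc₂.le) h2.1.1
    rw [Real.norm_eq_abs, abs_of_nonneg (mul_nonneg (le_trans hc₁.le h1.1) hW0)]
    exact mul_le_mul h1.2 h2.1.2 hW0 hc₂.le
  have hBtop : MemLp B ⊤ P := memLp_top_of_bound hBaesm _ hBbdd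
  have hBε2 : MemLp (fun ω => B ω * ε ω) 2 P := hε.smul (r := 2) hBtop
  have hε₀2 : MemLp ε₀ 2 P := by rw [hε₀]; exact hBε2.add hQ2
  -- products with ε integrate to zero
  have intZero : ∀ f : Ω → ℝ, StronglyMeasurable[mH] f →
      Integrable (fun ω => f ω * ε ω) P → ∫ ω, f ω * ε ω ∂P = 0 := by
    intro f hf hfε
    have h1 : P[f * ε|mH] =ᵐ[P] f * P[ε|mH] := condExp_mul_of_stronglyMeasurable_left hf hfε hεint
    have h2 : P[f * ε|mH] =ᵐ[P] 0 :=_root_.trans h1 (by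
      filter_upwards [hεH] with ω hω
      simp only [Pi.mul_apply, Pi.zero_apply] at hω ⊢
      rw [hω, mul_zero])
    calc ∫ ω, f ω * ε ω ∂P = ∫ ω, (P[f * ε|mH]) ω ∂P := (integral_condExp (f := f * ε) hHF).symm
      _ = ∫ ω, (0 : Ω → ℝ) ω ∂P := integral_congr_ae h2
      _ = 0 := by simp
  -- integrability of B² ε²
  have hB2meas : StronglyMeasurable[mH] (fun ω => (B ω) ^ 2) := hBmeasH.pow 2
  have hB2bdd : ∀ᵐ ω ∂P, ‖(B ω) ^ 2‖ ≤ (c₂ * c₁⁻¹) ^ 2 := by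
    filter_upwards [hBbdd] with ω h
    rw [norm_pow]
    exact pow_le_pow_left₀ (norm_nonneg _) h 2
  have hB2ε2int : Integrable (fun ω => (B ω) ^ 2 * ε ω ^ 2) P :=
    Integrable.bdd_mul hε2int ((hB2meas.mono hHF).aestronglyMeasurable) hB2bdd
  -- key computation: ∫ B² ε² = Tstar
  have key1 : ∫ ω, (B ω) ^ 2 * ε ω ^ 2 ∂P = Tstar := by
    have hA : P[(fun ω => (B ω) ^ 2) * (fun ω => ε ω ^ 2)|mH] =ᵐ[P]
        (fun ω => (B ω) ^ 2) * σ2 :=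
      condExp_mul_of_stronglyMeasurable_left hB2meas hB2ε2int hε2int
    have hA2 : (fun ω => (B ω) ^ 2) * σ2 =ᵐ[P] fun ω => ((T ω)⁻¹) ^ 2 * W ω := by
      filter_upwards [hWae] with ω h
      simp only [Pi.mul_apply]
      calc (B ω) ^ 2 * σ2 ω = ((T ω)⁻¹) ^ 2 * W ω * (W ω * σ2 ω) := by rw [hB]; ring
        _ = ((T ω)⁻¹) ^ 2 * W ω := by rw [h.2, mul_one]
    have step1 : ∫ ω, (B ω) ^ 2 * ε ω ^ 2 ∂P = ∫ ω, ((T ω)⁻¹) ^ 2 * W ω ∂P :=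
      calc ∫ ω, (B ω) ^ 2 * ε ω ^ 2 ∂P
          = ∫ ω, (P[(fun ω => (B ω) ^ 2) * (fun ω => ε ω ^ 2)|mH]) ω ∂P :=
            (integral_condExp (f := (fun ω => (B ω) ^ 2) * (fun ω => ε ω ^ 2)) hHF).symm
        _ = ∫ ω, ((T ω)⁻¹) ^ 2 * W ω ∂P := integral_congr_ae (_root_.trans hA hA2)
    have hTinv2meas : StronglyMeasurable[mG] (fun ω => ((T ω)⁻¹) ^ 2) := (hTmeasG.measurable.inv.stronglyMeasurable).pow 2
    have hTinv2bdd : ∀ᵐ ω ∂P, ‖((T ω)⁻¹) ^ 2‖ ≤ c₂ ^ 2 := by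
      filter_upwards [hTinvae] with ω h
      rw [norm_pow, Real.norm_eq_abs, abs_of_nonneg (le_trans hc₁.le h.1)]
      exact pow_le_pow_left₀ (le_trans hc₁.le h.1) h.2 2
    have hint2 : Integrable (fun ω => ((T ω)⁻¹) ^ 2 * W ω) P :=
      Integrable.bdd_mul hWint ((hTinv2meas.mono hmGF).aestronglyMeasurable) hTinv2bdd
    have hBc : P[(fun ω => ((T ω)⁻¹) ^ 2) * W|mG] =ᵐ[P]
        (fun ω => ((T ω)⁻¹) ^ 2) * P[W|mG] :=
      condExp_mul_of_stronglyMeasurable_left hTinv2meas hint2 hWint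
    have hBc2 : (fun ω => ((T ω)⁻¹) ^ 2) * P[W|mG] =ᵐ[P] fun ω => (T ω)⁻¹ := by
      rw [← hT]
      filter_upwards [hTpos] with ω h
      simp only [Pi.mul_apply]
      rw [sq, mul_assoc, inv_mul_cancel₀ (ne_of_gt h), mul_one]
    have step2 : ∫ ω, ((T ω)⁻¹) ^ 2 * W ω ∂P = ∫ ω, (T ω)⁻¹ ∂P :=
      calc ∫ ω, ((T ω)⁻¹) ^ 2 * W ω ∂P
          = ∫ ω, (P[(fun ω => ((T ω)⁻¹) ^ 2) * W|mG]) ω ∂P :=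
            (integral_condExp (f := (fun ω => ((T ω)⁻¹) ^ 2) * W) hmGF).symm
        _ = ∫ ω, (T ω)⁻¹ ∂P := integral_congr_ae (_root_.trans hBc hBc2)
    rw [step1, step2, hTstar]
  -- cross term
  have hQεint : Integrable (fun ω => Q ω * ε ω) P := mulInt _ _ hQ2 hε
  have hBQεint : Integrable (fun ω => (B ω * Q ω) * ε ω) P :=
    (Integrable.bdd_mul hQεint hBaesm hBbdd).congr (ae_of_all _ fun ω => by ring)
  have cross : ∫ ω, (B ω * Q ω) * ε ω ∂P = 0 :=
    intZero _ (hBmeasH.mul (hQmeas.mono hGH)) hBQεint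
  have hQsqint : Integrable (fun ω => Q ω ^ 2) P :=
    (mulInt Q Q hQ2 hQ2).congr (ae_of_all _ fun ω => (pow_two (Q ω)).symm)
  -- part (i)
  have parti : V₀ = Tstar + ∫ ω, Q ω ^ 2 ∂P := by
    have h2int : Integrable (fun ω => (2 * (B ω * Q ω)) * ε ω) P :=
      (hBQεint.const_mul 2).congr (ae_of_all _ fun ω => by ring)
    have hexp : ∀ ω, ε₀ ω ^ 2 =
        (B ω) ^ 2 * ε ω ^ 2 + ((2 * (B ω * Q ω)) * ε ω + Q ω ^ 2) := by
      intro ω; rw [hε₀, hB]; ring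
    have h2z : ∫ ω, (2 * (B ω * Q ω)) * ε ω ∂P = 0 := by
      rw [integral_congr_ae (ae_of_all _ fun ω => by ring :
        (fun ω => (2 * (B ω * Q ω)) * ε ω) =ᵐ[P] fun ω => 2 * ((B ω * Q ω) * ε ω)),
        integral_const_mul, cross, mul_zero]
    rw [hV₀]
    calc ∫ ω, ε₀ ω ^ 2 ∂P
        = ∫ ω, ((B ω) ^ 2 * ε ω ^ 2 + ((2 * (B ω * Q ω)) * ε ω + Q ω ^ 2)) ∂P :=
          integral_congr_ae (ae_of_all _ hexp)
      _ = (∫ ω, (B ω) ^ 2 * ε ω ^ 2 ∂P) +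
          ∫ ω, ((2 * (B ω * Q ω)) * ε ω + Q ω ^ 2) ∂P :=
          integral_add hB2ε2int (h2int.add hQsqint)
      _ = Tstar + ∫ ω, Q ω ^ 2 ∂P := by
          rw [key1, integral_add h2int hQsqint, h2z, zero_add]
  -- key scalar fact for part (ii): ∫ ε₀ (B ε) = Tstar
  have keyε₀ : ∫ ω, ε₀ ω * (B ω * ε ω) ∂P = Tstar := by
    have hexp : ∀ ω, ε₀ ω * (B ω * ε ω) = (B ω) ^ 2 * ε ω ^ 2 + (B ω * Q ω) * ε ω := by
      intro ω; rw [hε₀, hB]; ring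
    rw [integral_congr_ae (ae_of_all _ hexp), integral_add hB2ε2int hBQεint, key1, cross,
      add_zero]
  -- a general fact: ∫ (B ε) • Γ = 0 for G-measurable L² Γ
  have vecZero : ∀ (Γ : Ω → EuclideanSpace ℝ (Fin p)), StronglyMeasurable[mG] Γ →
      MemLp Γ 2 P → ∫ ω, (B ω * ε ω) • Γ ω ∂P = 0 := by
    intro Γ hΓm hΓ2
    have hint : Integrable (fun ω => (B ω * ε ω) • Γ ω) P := smulInt _ _ hBε2 hΓ2
    refine integral_eq_zero_of_forall_integral_inner_eq_zero ℝ _ hint fun u => ?_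
    have hre : ∀ ω, (inner ℝ u ((B ω * ε ω) • Γ ω) : ℝ) = (B ω * (inner ℝ u (Γ ω) : ℝ)) * ε ω := by
      intro ω; rw [real_inner_smul_right]; ring
    rw [integral_congr_ae (ae_of_all _ hre)]
    refine intZero _ (hBmeasH.mul
      (StronglyMeasurable.inner stronglyMeasurable_const (hΓm.mono hGH))) ?_
    have h1 : Integrable (fun ω => (inner ℝ u (Γ ω) : ℝ) * ε ω) P := mulInt _ _ (hΓ2.const_inner u) hε
    exact (Integrable.bdd_mul h1 hBaesm hBbdd).congr (ae_of_all _ fun ω => by ring)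
  -- ∫ ε₀ • Γ = ∫ Q • Γ for G-measurable L² Γ
  have ε₀Γ : ∀ (Γ : Ω → EuclideanSpace ℝ (Fin p)), StronglyMeasurable[mG] Γ →
      MemLp Γ 2 P → ∫ ω, ε₀ ω • Γ ω ∂P = ∫ ω, Q ω • Γ ω ∂P := by
    intro Γ hΓm hΓ2
    have h1 : ∀ ω, ε₀ ω • Γ ω = (B ω * ε ω) • Γ ω + Q ω • Γ ω := by
      intro ω; rw [hε₀, hB, add_smul]
    rw [integral_congr_ae (ae_of_all _ h1),
      integral_add (smulInt _ _ hBε2 hΓ2) (smulInt _ _ hQ2 hΓ2), vecZero Γ hΓm hΓ2, zero_add]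
  -- the scalar coefficient of an element of Λ3t
  have ccId : ∀ ω, (Tstar * T ω)⁻¹ * (W ω * ε ω) = Tstar⁻¹ * (B ω * ε ω) := by
    intro ω; rw [mul_inv, hB]; ring
  -- ∫ ε₀ cc = 1
  have ε₀cc : ∫ ω, ε₀ ω * ((Tstar * T ω)⁻¹ * (W ω * ε ω)) ∂P = 1 := by
    have h1 : ∀ ω, ε₀ ω * ((Tstar * T ω)⁻¹ * (W ω * ε ω)) =
        Tstar⁻¹ * (ε₀ ω * (B ω * ε ω)) := by
      intro ω; rw [ccId]; ring
    rw [integral_congr_ae (ae_of_all _ h1), integral_const_mul, keyε₀,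
      inv_mul_cancel₀ (ne_of_gt hTstar_pos)]
  have hε₀Bεint : Integrable (fun ω => ε₀ ω * (B ω * ε ω)) P := mulInt _ _ hε₀2 hBε2
  refine ⟨parti, ?_, ?_⟩
  · -- part (ii)
    intro g hg
    rw [hΛ3t] at hg
    obtain ⟨Γs, hΓm, hΓ2, hΓ0, hg2, hgeq⟩ := hg
    set v : EuclideanSpace ℝ (Fin p) := ∫ ω', Q ω' • Γs ω' ∂P with hv
    have hsplit : ∀ ω, ε₀ ω • g ω =
        ε₀ ω • Γs ω - (ε₀ ω * ((Tstar * T ω)⁻¹ * (W ω * ε ω))) • v := by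
      intro ω; rw [hgeq]
      simp only [smul_sub, smul_smul]
    have hint1 : Integrable (fun ω => ε₀ ω • Γs ω) P := smulInt _ _ hε₀2 hΓ2
    have hccL2 : MemLp (fun ω => (Tstar * T ω)⁻¹ * (W ω * ε ω)) 2 P := by
      have heq : (fun ω => (Tstar * T ω)⁻¹ * (W ω * ε ω)) =
          fun ω => Tstar⁻¹ * (B ω * ε ω) := funext ccId
      rw [heq]
      exact hBε2.const_mul _
    have hint2 : Integrable
        (fun ω => (ε₀ ω * ((Tstar * T ω)⁻¹ * (W ω * ε ω))) • v) P :=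
      (mulInt _ _ hε₀2 hccL2).smul_const v
    calc ∫ ω, ε₀ ω • g ω ∂P
        = ∫ ω, (ε₀ ω • Γs ω -
            (ε₀ ω * ((Tstar * T ω)⁻¹ * (W ω * ε ω))) • v) ∂P :=
          integral_congr_ae (ae_of_all _ hsplit)
      _ = (∫ ω, ε₀ ω • Γs ω ∂P) -
          ∫ ω, (ε₀ ω * ((Tstar * T ω)⁻¹ * (W ω * ε ω))) • v ∂P :=
          integral_sub hint1 hint2
      _ = v - (∫ ω, ε₀ ω * ((Tstar * T ω)⁻¹ * (W ω * ε ω)) ∂P) • v := by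
          rw [ε₀Γ Γs hΓm hΓ2, ← hv, integral_smul_const' mΩ P]
      _ = 0 := by rw [ε₀cc, one_smul, sub_self]
  · -- part (iii)
    set Γs : Ω → EuclideanSpace ℝ (Fin p) := fun ω => D ω - Q ω • b with hΓs
    have hΓmeas : StronglyMeasurable[mG] Γs := hD.sub (hQmeas.smul_const b)
    have hQb2 : MemLp (fun ω => Q ω • b) 2 P := (memLp_top_const b).smul (r := 2) hQ2
    have hΓ2 : MemLp Γs 2 P := hD2.sub hQb2
    have hΓ0 : ∫ ω, Γs ω ∂P = 0 := by
      rw [hΓs, integral_sub (hD2.integrable one_le_two)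
        ((hQ2.integrable one_le_two).smul_const b), integral_smul_const' mΩ P, hD0, hQ0, zero_smul,
        sub_zero]
    have hg2 : MemLp (fun ω => D ω - ε₀ ω • b) 2 P :=
      hD2.sub ((memLp_top_const b).smul (r := 2) hε₀2)
    have hV₀pos : 0 < V₀ := by
      have h1 : 0 ≤ ∫ ω, Q ω ^ 2 ∂P := integral_nonneg fun ω => sq_nonneg _
      rw [parti]; linarith
    have hv' : ∫ ω', Q ω' • Γs ω' ∂P = Tstar • b := by
      have h1 : ∀ ω, Q ω • Γs ω = Q ω • D ω - (Q ω ^ 2) • b := by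
        intro ω; rw [hΓs]
        simp only [smul_sub, smul_smul, ← pow_two]
      rw [integral_congr_ae (ae_of_all _ h1),
        integral_sub (smulInt _ _ hQ2 hD2) (hQsqint.smul_const b), integral_smul_const' mΩ P]
      have hQD : ∫ ω, Q ω • D ω ∂P = V₀ • b := by
        rw [hb, smul_smul, mul_inv_cancel₀ (ne_of_gt hV₀pos), one_smul]
      rw [hQD, ← sub_smul]
      congr 1
      rw [parti]; ring
    rw [hΛ3t]
    refine ⟨Γs, hΓmeas, hΓ2, hΓ0, hg2, ?_⟩
    rw [hv']
    funext ω
    have hcoef : ((Tstar * T ω)⁻¹ * (W ω * ε ω)) * Tstar = (T ω)⁻¹ * W ω * ε ω := by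
      rw [mul_inv, show Tstar⁻¹ * (T ω)⁻¹ * (W ω * ε ω) * Tstar =
        (Tstar⁻¹ * Tstar) * ((T ω)⁻¹ * W ω * ε ω) from by ring,
        inv_mul_cancel₀ (ne_of_gt hTstar_pos), one_mul]
    rw [smul_smul, hcoef, hε₀, hΓs]
    simp only []
    rw [add_smul]
    abel
end

section
/- (Second-order bias of the plug-in efficient score: the core of rate double robustness in Theorem 2.) Assume the conditional moment restriction: τ, λ, μ are 𝒢-measurable with E[Y − τ·A − (1−S)·λ·(A − e) | ℋ] = μ a.s., |λ| ≤ C_λ a.s., and Y ∈ L²(P). Let the estimated nuisances be: ê 𝒢-measurable with δ ≤ ê ≤ 1−δ a.s. for some δ > 0; μ̂ 𝒢-measurable with μ̂ − μ ∈ L²(P); σ̂₁², σ̂₀² 𝒢-measurable with c₁ ≤ σ̂ₐ² ≤ c₂ a.s. for constants 0 < c₁ ≤ c₂ (a = 0,1); and D a 𝒢-measurable ℝ^p-valued random variable with ‖D‖ ≤ C_D a.s. Define Ŵ = A/σ̂₁² + (1−A)/σ̂₀², T̂ = ê/σ̂₁² + (1−ê)/σ̂₀², ε̂ = Y − τ·A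 − (1−S)·λ·(A − ê) − μ̂, and the plug-in score Ŝ = D·(A − (ê/σ̂₁²)·T̂⁻¹)·Ŵ·ε̂. Then the exact identity holds: E[Ŝ] = E[ D · (σ̂₁²·σ̂₀²·T̂)⁻¹ · (e − ê) · { (μ − μ̂) − (1−S)·λ·(e − ê) } ], and consequently ‖E[Ŝ]‖ ≤ C·( ‖ê − e‖_{L²(P)}·‖μ̂ − μ‖_{L²(P)} + ‖ê − e‖²_{L²(P)} ) for a constant C depending only on (δ, c₁, c₂, C_D, C_λ). -/
open MeasureTheory

section Helpers

variable {Ω : Type*} {mΩ : MeasurableSpace Ω} {P : Measure Ω}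

private lemma integral_mul_eq_zero_of_condexp_zero {m : MeasurableSpace Ω} (hm : m ≤ mΩ)
    [IsFiniteMeasure P] {f g : Ω → ℝ}
    (hf : StronglyMeasurable[m] f) (hg : Integrable g P)
    (hfg : Integrable (fun ω => f ω * g ω) P)
    (hg0 : P[g|m] =ᵐ[P] 0) :
    ∫ ω, f ω * g ω ∂P = 0 := by
  have h1 : ∫ ω, f ω * g ω ∂P = ∫ ω, (P[fun ω => f ω * g ω|m]) ω ∂P :=
    (integral_condExp hm).symm
  rw [h1]
  have h2 : P[fun ω => f ω * g ω|m] =ᵐ[P] fun ω => f ω * (P[g|m]) ω :=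
    condExp_mul_of_stronglyMeasurable_left hf hfg hg
  have h3 : (fun ω => f ω * (P[g|m]) ω) =ᵐ[P] (fun _ => (0:ℝ)) := by
    filter_upwards [hg0] with ω h
    simp [h]
  rw [integral_congr_ae (h2.trans h3)]
  simp

private lemma integral_abs_mul_le_L2 (P : Measure Ω) {f g : Ω → ℝ}
    (hf : MemLp f 2 P) (hg : MemLp g 2 P) :
    ∫ ω, |f ω * g ω| ∂P ≤ (eLpNorm f 2 P).toReal * (eLpNorm g 2 P).toReal := by
  have hfn : MemLp (fun ω => |f ω|) 2 P := by simpa [Real.norm_eq_abs] using hf.norm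
  have hgn : MemLp (fun ω => |g ω|) 2 P := by simpa [Real.norm_eq_abs] using hg.norm
  have h1 : ∫ ω, |f ω * g ω| ∂P = @inner ℝ _ _ (hfn.toLp _) (hgn.toLp _) := by
    rw [L2.inner_def]
    refine integral_congr_ae ?_
    filter_upwards [hfn.coeFn_toLp, hgn.coeFn_toLp] with ω h1 h2
    simp [h1, h2, abs_mul, RCLike.inner_apply, mul_comm]
  rw [h1]
  calc @inner ℝ _ _ (hfn.toLp _) (hgn.toLp _) ≤ ‖hfn.toLp _‖ * ‖hgn.toLp _‖ :=
        real_inner_le_norm _ _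
    _ = (eLpNorm f 2 P).toReal * (eLpNorm g 2 P).toReal := by
        rw [Lp.norm_toLp, Lp.norm_toLp]
        have h2 : eLpNorm (fun ω => |f ω|) 2 P = eLpNorm f 2 P := by
          simpa [Real.norm_eq_abs] using eLpNorm_norm (p := 2) (μ := P) f
        have h3 : eLpNorm (fun ω => |g ω|) 2 P = eLpNorm g 2 P := by
          simpa [Real.norm_eq_abs] using eLpNorm_norm (p := 2) (μ := P) g
        rw [h2, h3]

private lemma abs_mul2_le {x y bx by' : ℝ} (hx : |x| ≤ bx) (hy : |y| ≤ by')
    (hbx : 0 ≤ bx) : |x * y| ≤ bx * by' := by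
  rw [abs_mul]
  exact mul_le_mul hx hy (abs_nonneg _) hbx

private lemma abs_mul3_le {x y z bx by' bz : ℝ} (hx : |x| ≤ bx) (hy : |y| ≤ by')
    (hz : |z| ≤ bz) (hbx : 0 ≤ bx) (hby : 0 ≤ by') : |x * y * z| ≤ bx * by' * bz := by
  rw [abs_mul]
  exact mul_le_mul (abs_mul2_le hx hy hbx) hz (abs_nonneg _) (mul_nonneg hbx hby)

end Helpers

set_option maxHeartbeats 4000000 in
/-- second-order bias of the plug-in efficient score; core of the
rate double robustness in Theorem 2: the mean of the efficient score evaluated at the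
true structural parameters but estimated nuisance functions satisfies an exact
product-bias identity, and hence is bounded by a second-order term in the nuisance
estimation errors, with a constant depending only on `(δ, c₁, c₂, C_D, C_λ)`. -/
theorem second_order_bias_of_plug_in_efficient_score
    {Ω : Type*} {mΩ : MeasurableSpace Ω} (P : Measure Ω) [IsProbabilityMeasure P]
    {p : ℕ} {mG mH : MeasurableSpace Ω} (hGH : mG ≤ mH) (hHF : mH ≤ mΩ)
    (A S Y : Ω → ℝ)
    (hA : StronglyMeasurable[mH] A) (hA01 : ∀ ω, A ω = 0 ∨ A ω = 1)
    (hS : StronglyMeasurable[mG] S) (hS01 : ∀ ω, S ω = 0 ∨ S ω = 1)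
    (hY2 : MemLp Y 2 P)
    (e : Ω → ℝ) (he : e = P[A|mG]) (he01 : ∀ᵐ ω ∂P, 0 < e ω ∧ e ω < 1)
    -- true structural functions and the conditional moment restriction
    (τ lam μ : Ω → ℝ)
    (hτ : StronglyMeasurable[mG] τ) (hlam : StronglyMeasurable[mG] lam)
    (hμ : StronglyMeasurable[mG] μ)
    (Clam : ℝ) (hlamb : ∀ᵐ ω ∂P, |lam ω| ≤ Clam)
    (hres : Integrable (fun ω => Y ω - τ ω * A ω - (1 - S ω) * lam ω * (A ω - e ω)) P)
    (hmom : P[fun ω => Y ω - τ ω * A ω - (1 - S ω) * lam ω * (A ω - e ω)|mH] =ᵐ[P] μ)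
    -- estimated nuisance functions
    (ehat muhat s1sq s0sq : Ω → ℝ)
    (hehatmeas : StronglyMeasurable[mG] ehat) (hmuhatmeas : StronglyMeasurable[mG] muhat)
    (hs1meas : StronglyMeasurable[mG] s1sq) (hs0meas : StronglyMeasurable[mG] s0sq)
    (δ : ℝ) (hδ : 0 < δ) (hehatb : ∀ ω, δ ≤ ehat ω ∧ ehat ω ≤ 1 - δ)
    (hmuhat : MemLp (fun ω => muhat ω - μ ω) 2 P)
    (c₁ c₂ : ℝ) (hc₁ : 0 < c₁)
    (hs1b : ∀ ω, c₁ ≤ s1sq ω ∧ s1sq ω ≤ c₂) (hs0b : ∀ ω, c₁ ≤ s0sq ω ∧ s0sq ω ≤ c₂)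
    (D : Ω → EuclideanSpace ℝ (Fin p)) (hD : StronglyMeasurable[mG] D)
    (CD : ℝ) (hDb : ∀ ω, ‖D ω‖ ≤ CD)
    -- plug-in quantities
    (What That εhat : Ω → ℝ) (Shat : Ω → EuclideanSpace ℝ (Fin p))
    (hWhat : What = fun ω => A ω / s1sq ω + (1 - A ω) / s0sq ω)
    (hThat : That = fun ω => ehat ω / s1sq ω + (1 - ehat ω) / s0sq ω)
    (hεhat : εhat = fun ω =>
      Y ω - τ ω * A ω - (1 - S ω) * lam ω * (A ω - ehat ω) - muhat ω)
    (hShat : Shat = fun ω =>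
      ((A ω - (ehat ω / s1sq ω) * (That ω)⁻¹) * What ω * εhat ω) • D ω) :
    -- exact second-order bias identity
    (∫ ω, Shat ω ∂P) =
      ∫ ω, ((s1sq ω * s0sq ω * That ω)⁻¹ * (e ω - ehat ω) *
        ((μ ω - muhat ω) - (1 - S ω) * lam ω * (e ω - ehat ω))) • D ω ∂P ∧
    -- second-order bound with explicit constant depending only on (δ, c₁, c₂, C_D, C_λ)
    ‖∫ ω, Shat ω ∂P‖ ≤ (CD * c₂ / c₁ ^ 2 * max 1 Clam) *
      ((eLpNorm (fun ω => ehat ω - e ω) 2 P).toReal *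
          (eLpNorm (fun ω => muhat ω - μ ω) 2 P).toReal +
        (eLpNorm (fun ω => ehat ω - e ω) 2 P).toReal ^ 2) := by
  have hmG : mG ≤ mΩ := hGH.trans hHF
  have hΩne : Nonempty Ω := by
    by_contra h
    have h0 : P Set.univ = 0 := by
      rw [Set.univ_eq_empty_iff.2 (not_nonempty_iff.mp h)]; simp
    simp [measure_univ] at h0
  obtain ⟨ω₀⟩ := hΩne
  -- basic numeric facts
  have hs1pos : ∀ ω, 0 < s1sq ω := fun ω => lt_of_lt_of_le hc₁ (hs1b ω).1
  have hs0pos : ∀ ω, 0 < s0sq ω := fun ω => lt_of_lt_of_le hc₁ (hs0b ω).1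
  have hc₁₂ : c₁ ≤ c₂ := le_trans (hs1b ω₀).1 (hs1b ω₀).2
  have hCD0 : 0 ≤ CD := le_trans (norm_nonneg _) (hDb ω₀)
  have hClam0 : 0 ≤ Clam := by
    obtain ⟨ω, hω⟩ := hlamb.exists
    exact le_trans (abs_nonneg _) hω
  have hehat01 : ∀ ω, 0 ≤ ehat ω ∧ ehat ω ≤ 1 := fun ω =>
    ⟨le_trans hδ.le (hehatb ω).1, le_trans (hehatb ω).2 (by linarith)⟩
  -- the denominator
  have hTprod : ∀ ω, s1sq ω * s0sq ω * That ω
      = ehat ω * s0sq ω + (1 - ehat ω) * s1sq ω := by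
    intro ω
    have h1 := (hs1pos ω).ne'
    have h0 := (hs0pos ω).ne'
    rw [hThat]
    field_simp
  have hTlb : ∀ ω, c₁ ≤ s1sq ω * s0sq ω * That ω := by
    intro ω
    rw [hTprod ω]
    nlinarith [(hehat01 ω).1, (hehat01 ω).2, (hs1b ω).1, (hs0b ω).1]
  have hTpos : ∀ ω, 0 < s1sq ω * s0sq ω * That ω := fun ω => lt_of_lt_of_le hc₁ (hTlb ω)
  have hThatpos : ∀ ω, 0 < That ω := by
    intro ω
    nlinarith [hTpos ω, mul_pos (hs1pos ω) (hs0pos ω)]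
  have hKpos : ∀ ω, 0 < (s1sq ω * s0sq ω * That ω)⁻¹ := fun ω => inv_pos.2 (hTpos ω)
  have hKle : ∀ ω, (s1sq ω * s0sq ω * That ω)⁻¹ ≤ c₁⁻¹ := fun ω =>
    inv_anti₀ hc₁ (hTlb ω)
  have hKabs : ∀ ω, |(s1sq ω * s0sq ω * That ω)⁻¹| ≤ c₁⁻¹ := fun ω => by
    rw [abs_of_pos (hKpos ω)]; exact hKle ω
  -- pointwise factorization of the plug-in weight
  have hfac : ∀ ω, (A ω - ehat ω / s1sq ω * (That ω)⁻¹) * What ω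
      = (A ω - ehat ω) * (s1sq ω * s0sq ω * That ω)⁻¹ := by
    intro ω
    have h1 := (hs1pos ω).ne'
    have h0 := (hs0pos ω).ne'
    have hQ : ehat ω * s0sq ω + (1 - ehat ω) * s1sq ω ≠ 0 := by
      have h3 := hTpos ω
      rw [hTprod ω] at h3
      exact h3.ne'
    have hQ' : ehat ω * s0sq ω + s1sq ω * (1 - ehat ω) ≠ 0 := by
      intro hc; apply hQ; linarith
    have hTeq : That ω = (ehat ω * s0sq ω + (1 - ehat ω) * s1sq ω) / (s1sq ω * s0sq ω) := by
      rw [hThat]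
      field_simp
    rcases hA01 ω with h | h <;>
      simp only [hWhat, h] <;> rw [hTeq] <;> field_simp <;> ring
  -- measurability infrastructure
  have heSM : StronglyMeasurable[mG] e := he ▸ stronglyMeasurable_condExp
  have hThatSM : StronglyMeasurable[mG] That := by
    rw [hThat]
    exact ((hehatmeas.measurable.div hs1meas.measurable).add
      ((measurable_const.sub hehatmeas.measurable).div hs0meas.measurable)).stronglyMeasurable
  have hKSM : StronglyMeasurable[mG] (fun ω => (s1sq ω * s0sq ω * That ω)⁻¹) :=
    (((hs1meas.measurable.mul hs0meas.measurable).mul hThatSM.measurable).inv).stronglyMeasurable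
  have hhSM : StronglyMeasurable[mG]
      (fun ω => (μ ω - muhat ω) - (1 - S ω) * lam ω * (e ω - ehat ω)) :=
    (hμ.sub hmuhatmeas).sub
      (((stronglyMeasurable_const.sub hS).mul hlam).mul (heSM.sub hehatmeas))
  -- pointwise / a.e. bounds
  have hAb : ∀ ω, |A ω - ehat ω| ≤ 1 := by
    intro ω
    have h1 := (hehat01 ω).1
    have h2 := (hehat01 ω).2
    rcases hA01 ω with h | h <;> rw [h, abs_le] <;> constructor <;> linarith
  have hAeb : ∀ᵐ ω ∂P, |A ω - e ω| ≤ 1 := by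
    filter_upwards [he01] with ω h
    rcases hA01 ω with h' | h' <;> rw [h', abs_le] <;> constructor <;> linarith [h.1, h.2]
  have heeb : ∀ᵐ ω ∂P, |e ω - ehat ω| ≤ 1 := by
    filter_upwards [he01] with ω h
    have h1 := (hehat01 ω).1
    have h2 := (hehat01 ω).2
    rw [abs_le]; constructor <;> linarith [h.1, h.2]
  have hS1b : ∀ ω, |1 - S ω| ≤ 1 := by
    intro ω
    rcases hS01 ω with h | h <;> simp [h]
  -- integrability of building blocks
  have hμint : Integrable μ P := integrable_condExp.congr hmom
  have hbμ : Integrable (fun ω => muhat ω - μ ω) P := hmuhat.integrable one_le_two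
  have hmuhatint : Integrable muhat P :=
    (hbμ.add hμint).congr (Filter.Eventually.of_forall fun ω => by simp)
  have heint : Integrable e P := he ▸ integrable_condExp
  have hAint : Integrable A P := by
    refine Integrable.mono' (integrable_const 1) (hA.mono hHF).aestronglyMeasurable ?_
    exact Filter.Eventually.of_forall fun ω => by
      rcases hA01 ω with h | h <;> simp [h]
  have hgbint : Integrable (fun ω => (1 - S ω) * lam ω * (e ω - ehat ω)) P := by
    refine Integrable.mono' (integrable_const Clam)
      ((((stronglyMeasurable_const.sub hS).mul hlam).mul
        (heSM.sub hehatmeas)).mono hmG).aestronglyMeasurable ?_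
    filter_upwards [hlamb, heeb] with ω hl hee
    have h4 : |(1 - S ω) * lam ω * (e ω - ehat ω)| ≤ 1 * Clam * 1 :=
      abs_mul3_le (hS1b ω) hl hee zero_le_one hClam0
    calc ‖(1 - S ω) * lam ω * (e ω - ehat ω)‖ = |(1 - S ω) * lam ω * (e ω - ehat ω)| :=
          Real.norm_eq_abs _
      _ ≤ 1 * Clam * 1 := h4
      _ = Clam := by ring
  have hhint : Integrable
      (fun ω => (μ ω - muhat ω) - (1 - S ω) * lam ω * (e ω - ehat ω)) P := by
    have h1 : Integrable (fun ω => μ ω - muhat ω) P :=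
      hbμ.neg.congr (Filter.Eventually.of_forall fun ω => by simp [neg_sub])
    exact h1.sub hgbint
  have hRμint : Integrable
      (fun ω => (Y ω - τ ω * A ω - (1 - S ω) * lam ω * (A ω - e ω)) - μ ω) P :=
    hres.sub hμint
  have hεdecomp : ∀ ω, εhat ω =
      ((Y ω - τ ω * A ω - (1 - S ω) * lam ω * (A ω - e ω)) - μ ω) +
        ((μ ω - muhat ω) - (1 - S ω) * lam ω * (e ω - ehat ω)) := by
    intro ω
    rw [hεhat]
    ring
  have hεint : Integrable εhat P :=
    (hRμint.add hhint).congr (Filter.Eventually.of_forall fun ω => (hεdecomp ω).symm)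
  -- the conditional expectations vanish
  have hcμ : P[μ|mH] = μ := condExp_of_stronglyMeasurable hHF (hμ.mono hGH) hμint
  have hcondH : P[fun ω => (Y ω - τ ω * A ω - (1 - S ω) * lam ω * (A ω - e ω)) - μ ω|mH]
      =ᵐ[P] 0 := by
    have hsub := condExp_sub (m := mH) hres hμint
    filter_upwards [hsub, hmom] with ω h1 h2
    rw [Pi.zero_apply]
    have h1' : (P[fun ω => (Y ω - τ ω * A ω - (1 - S ω) * lam ω * (A ω - e ω)) - μ ω|mH]) ω
        = (P[fun ω => Y ω - τ ω * A ω - (1 - S ω) * lam ω * (A ω - e ω)|mH]) ω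
          - (P[μ|mH]) ω := h1
    rw [hcμ] at h1'
    rw [h1', h2, sub_self]
  have hce : P[e|mG] = e := condExp_of_stronglyMeasurable hmG heSM heint
  have hcondG : P[fun ω => A ω - e ω|mG] =ᵐ[P] 0 := by
    have hsub := condExp_sub (m := mG) hAint heint
    filter_upwards [hsub] with ω h1
    rw [Pi.zero_apply]
    have h1' : (P[fun ω => A ω - e ω|mG]) ω = (P[A|mG]) ω - (P[e|mG]) ω := h1
    rw [hce, ← he] at h1'
    rw [h1', sub_self]
  -- integrability of the score and of the RHS integrand
  have hcfullb : ∀ ω, |(A ω - ehat ω / s1sq ω * (That ω)⁻¹) * What ω| ≤ c₁⁻¹ := by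
    intro ω
    rw [hfac ω]
    calc |(A ω - ehat ω) * (s1sq ω * s0sq ω * That ω)⁻¹| ≤ 1 * c₁⁻¹ :=
          abs_mul2_le (hAb ω) (hKabs ω) zero_le_one
      _ = c₁⁻¹ := one_mul _
  have hfacSM : StronglyMeasurable[mH]
      (fun ω => (A ω - ehat ω / s1sq ω * (That ω)⁻¹) * What ω) := by
    have hWSM : StronglyMeasurable[mH] What := by
      rw [hWhat]
      exact ((hA.measurable.div (hs1meas.mono hGH).measurable).add
        ((measurable_const.sub hA.measurable).div
          (hs0meas.mono hGH).measurable)).stronglyMeasurable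
    exact ((hA.measurable.sub
      (((hehatmeas.mono hGH).measurable.div (hs1meas.mono hGH).measurable).mul
        ((hThatSM.mono hGH).measurable.inv))).stronglyMeasurable).mul hWSM
  have hcfullint : Integrable
      (fun ω => (A ω - ehat ω / s1sq ω * (That ω)⁻¹) * What ω * εhat ω) P := by
    refine Integrable.bdd_mul (c := c₁⁻¹) hεint (hfacSM.mono hHF).aestronglyMeasurable ?_
    exact Filter.Eventually.of_forall fun ω => by
      rw [Real.norm_eq_abs]; exact hcfullb ω
  have hShatint : Integrable Shat P := by
    rw [hShat]
    refine Integrable.mono' (hcfullint.norm.const_mul CD)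
      (hcfullint.aestronglyMeasurable.smul ((hD.mono hmG).aestronglyMeasurable)) ?_
    refine Filter.Eventually.of_forall fun ω => ?_
    rw [norm_smul]
    exact (mul_le_mul_of_nonneg_left (hDb ω) (norm_nonneg _)).trans_eq (mul_comm _ _)
  have hc3int : Integrable (fun ω => (s1sq ω * s0sq ω * That ω)⁻¹ * (e ω - ehat ω) *
      ((μ ω - muhat ω) - (1 - S ω) * lam ω * (e ω - ehat ω))) P := by
    refine Integrable.bdd_mul (c := c₁⁻¹) hhint
      (((hKSM.mul (heSM.sub hehatmeas)).mono hmG).aestronglyMeasurable) ?_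
    filter_upwards [heeb] with ω hee
    rw [Real.norm_eq_abs]
    calc |(s1sq ω * s0sq ω * That ω)⁻¹ * (e ω - ehat ω)| ≤ c₁⁻¹ * 1 :=
          abs_mul2_le (hKabs ω) hee (inv_nonneg.2 hc₁.le)
      _ = c₁⁻¹ := mul_one _
  have hG3int : Integrable (fun ω => ((s1sq ω * s0sq ω * That ω)⁻¹ * (e ω - ehat ω) *
      ((μ ω - muhat ω) - (1 - S ω) * lam ω * (e ω - ehat ω))) • D ω) P := by
    refine Integrable.mono' (hc3int.norm.const_mul CD)
      (hc3int.aestronglyMeasurable.smul ((hD.mono hmG).aestronglyMeasurable)) ?_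
    refine Filter.Eventually.of_forall fun ω => ?_
    rw [norm_smul]
    exact (mul_le_mul_of_nonneg_left (hDb ω) (norm_nonneg _)).trans_eq (mul_comm _ _)
  -- the scalar identity, tested against every vector v
  have hscal : ∀ v : EuclideanSpace ℝ (Fin p),
      ∫ ω, (inner ℝ v (Shat ω) : ℝ) ∂P =
      ∫ ω, (inner ℝ v (((s1sq ω * s0sq ω * That ω)⁻¹ * (e ω - ehat ω) *
        ((μ ω - muhat ω) - (1 - S ω) * lam ω * (e ω - ehat ω))) • D ω) : ℝ) ∂P := by
    intro v
    have hdSM : StronglyMeasurable[mG] (fun ω => (inner ℝ v (D ω) : ℝ)) :=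
      (continuous_const.inner continuous_id).comp_stronglyMeasurable hD
    have hdb : ∀ ω, |(inner ℝ v (D ω) : ℝ)| ≤ ‖v‖ * CD := fun ω =>
      (abs_real_inner_le_norm v (D ω)).trans
        (mul_le_mul_of_nonneg_left (hDb ω) (norm_nonneg v))
    -- term 1 : E[ K(A-ehat)d * (R-μ) ] = 0, and its integrability
    have hint1 : Integrable (fun ω =>
        ((s1sq ω * s0sq ω * That ω)⁻¹ * (A ω - ehat ω) * (inner ℝ v (D ω) : ℝ)) *
        ((Y ω - τ ω * A ω - (1 - S ω) * lam ω * (A ω - e ω)) - μ ω)) P := by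
      refine Integrable.bdd_mul (c := c₁⁻¹ * 1 * (‖v‖ * CD)) hRμint
        ((((hKSM.mono hGH).mul (hA.sub (hehatmeas.mono hGH))).mul
          (hdSM.mono hGH)).mono hHF).aestronglyMeasurable ?_
      refine Filter.Eventually.of_forall fun ω => ?_
      rw [Real.norm_eq_abs]
      exact abs_mul3_le (hKabs ω) (hAb ω) (hdb ω) (inv_nonneg.2 hc₁.le) zero_le_one
    have hterm1 : ∫ ω, ((s1sq ω * s0sq ω * That ω)⁻¹ * (A ω - ehat ω) * (inner ℝ v (D ω) : ℝ)) *
        ((Y ω - τ ω * A ω - (1 - S ω) * lam ω * (A ω - e ω)) - μ ω) ∂P = 0 := by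
      refine integral_mul_eq_zero_of_condexp_zero hHF ?_ hRμint hint1 hcondH
      exact ((hKSM.mono hGH).mul (hA.sub (hehatmeas.mono hGH))).mul (hdSM.mono hGH)
    -- term 2 : E[ K h d * (A - e) ] = 0, and its integrability
    have hint2 : Integrable (fun ω => ((s1sq ω * s0sq ω * That ω)⁻¹ *
        ((μ ω - muhat ω) - (1 - S ω) * lam ω * (e ω - ehat ω)) * (inner ℝ v (D ω) : ℝ)) *
        (A ω - e ω)) P := by
      have hb1 : Integrable (fun ω =>
          ((s1sq ω * s0sq ω * That ω)⁻¹ * (inner ℝ v (D ω) : ℝ) * (A ω - e ω)) *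
          ((μ ω - muhat ω) - (1 - S ω) * lam ω * (e ω - ehat ω))) P := by
        refine Integrable.bdd_mul (c := c₁⁻¹ * (‖v‖ * CD) * 1) hhint
          ((((hKSM.mono hGH).mul (hdSM.mono hGH)).mul
            (hA.sub (heSM.mono hGH))).mono hHF).aestronglyMeasurable ?_
        filter_upwards [hAeb] with ω hae
        rw [Real.norm_eq_abs]
        exact abs_mul3_le (hKabs ω) (hdb ω) hae (inv_nonneg.2 hc₁.le)
          (mul_nonneg (norm_nonneg _) hCD0)
      exact hb1.congr (Filter.Eventually.of_forall fun ω => by ring)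
    have hterm2 : ∫ ω, ((s1sq ω * s0sq ω * That ω)⁻¹ *
        ((μ ω - muhat ω) - (1 - S ω) * lam ω * (e ω - ehat ω)) * (inner ℝ v (D ω) : ℝ)) *
        (A ω - e ω) ∂P = 0 := by
      refine integral_mul_eq_zero_of_condexp_zero hmG ?_ (hAint.sub heint) hint2 hcondG
      exact (hKSM.mul hhSM).mul hdSM
    -- term 3 : integrability
    have hint3 : Integrable (fun ω => ((s1sq ω * s0sq ω * That ω)⁻¹ * (e ω - ehat ω) *
        ((μ ω - muhat ω) - (1 - S ω) * lam ω * (e ω - ehat ω))) * (inner ℝ v (D ω) : ℝ)) P := by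
      have hb1 : Integrable (fun ω => (inner ℝ v (D ω) : ℝ) *
          ((s1sq ω * s0sq ω * That ω)⁻¹ * (e ω - ehat ω) *
          ((μ ω - muhat ω) - (1 - S ω) * lam ω * (e ω - ehat ω)))) P := by
        refine Integrable.bdd_mul (c := ‖v‖ * CD) hc3int ((hdSM.mono hmG).aestronglyMeasurable) ?_
        exact Filter.Eventually.of_forall fun ω => by
          rw [Real.norm_eq_abs]; exact hdb ω
      exact hb1.congr (Filter.Eventually.of_forall fun ω => by ring)
    -- pointwise decomposition of the integrand
    have hpt : ∀ ω, (inner ℝ v (Shat ω) : ℝ) =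
        ((s1sq ω * s0sq ω * That ω)⁻¹ * (A ω - ehat ω) * (inner ℝ v (D ω) : ℝ)) *
          ((Y ω - τ ω * A ω - (1 - S ω) * lam ω * (A ω - e ω)) - μ ω) +
        (((s1sq ω * s0sq ω * That ω)⁻¹ *
          ((μ ω - muhat ω) - (1 - S ω) * lam ω * (e ω - ehat ω)) * (inner ℝ v (D ω) : ℝ)) *
          (A ω - e ω) +
        ((s1sq ω * s0sq ω * That ω)⁻¹ * (e ω - ehat ω) *
          ((μ ω - muhat ω) - (1 - S ω) * lam ω * (e ω - ehat ω))) * (inner ℝ v (D ω) : ℝ)) := by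
      intro ω
      simp only [hShat]
      rw [real_inner_smul_right, hfac ω, hεdecomp ω]
      ring
    have hpt2 : ∀ ω, (inner ℝ v (((s1sq ω * s0sq ω * That ω)⁻¹ * (e ω - ehat ω) *
        ((μ ω - muhat ω) - (1 - S ω) * lam ω * (e ω - ehat ω))) • D ω) : ℝ) =
        ((s1sq ω * s0sq ω * That ω)⁻¹ * (e ω - ehat ω) *
          ((μ ω - muhat ω) - (1 - S ω) * lam ω * (e ω - ehat ω))) * (inner ℝ v (D ω) : ℝ) :=
      fun ω => real_inner_smul_right _ _ _
    have hint23 : Integrable (fun ω => ((s1sq ω * s0sq ω * That ω)⁻¹ *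
        ((μ ω - muhat ω) - (1 - S ω) * lam ω * (e ω - ehat ω)) * (inner ℝ v (D ω) : ℝ)) *
        (A ω - e ω) +
        ((s1sq ω * s0sq ω * That ω)⁻¹ * (e ω - ehat ω) *
          ((μ ω - muhat ω) - (1 - S ω) * lam ω * (e ω - ehat ω))) * (inner ℝ v (D ω) : ℝ)) P :=
      hint2.add hint3
    rw [integral_congr_ae (Filter.Eventually.of_forall hpt),
      integral_congr_ae (Filter.Eventually.of_forall hpt2),
      integral_add hint1 hint23, integral_add hint2 hint3, hterm1, hterm2]
    ring
  -- the exact identity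
  have hid : (∫ ω, Shat ω ∂P) =
      ∫ ω, ((s1sq ω * s0sq ω * That ω)⁻¹ * (e ω - ehat ω) *
        ((μ ω - muhat ω) - (1 - S ω) * lam ω * (e ω - ehat ω))) • D ω ∂P := by
    refine ext_inner_left ℝ fun v => ?_
    rw [← integral_inner hShatint v, ← integral_inner hG3int v]
    exact hscal v
  refine ⟨hid, ?_⟩
  rw [hid]
  -- second-order bound
  have hee2 : MemLp (fun ω => ehat ω - e ω) 2 P := by
    refine MemLp.of_bound ((hehatmeas.sub heSM).mono hmG).aestronglyMeasurable 1 ?_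
    filter_upwards [heeb] with ω h
    rw [Real.norm_eq_abs, abs_sub_comm]
    exact h
  have hCS1 : ∫ ω, |(ehat ω - e ω) * (muhat ω - μ ω)| ∂P ≤
      (eLpNorm (fun ω => ehat ω - e ω) 2 P).toReal *
      (eLpNorm (fun ω => muhat ω - μ ω) 2 P).toReal :=
    integral_abs_mul_le_L2 P hee2 hmuhat
  have hCS2 : ∫ ω, |(ehat ω - e ω) * (ehat ω - e ω)| ∂P ≤
      (eLpNorm (fun ω => ehat ω - e ω) 2 P).toReal *
      (eLpNorm (fun ω => ehat ω - e ω) 2 P).toReal :=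
    integral_abs_mul_le_L2 P hee2 hee2
  -- integrability of the dominating function
  have hI1int : Integrable (fun ω => |(ehat ω - e ω) * (muhat ω - μ ω)|) P := by
    have h1 : Integrable (fun ω => (ehat ω - e ω) * (muhat ω - μ ω)) P := by
      refine Integrable.bdd_mul (c := 1) hbμ
        (((hehatmeas.sub heSM).mono hmG).aestronglyMeasurable) ?_
      filter_upwards [heeb] with ω h
      rw [Real.norm_eq_abs, abs_sub_comm]
      exact h
    exact h1.abs
  have hI2int : Integrable (fun ω => |(ehat ω - e ω) * (ehat ω - e ω)|) P := by
    refine Integrable.mono' (integrable_const 1)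
      ((((hehatmeas.sub heSM).mul (hehatmeas.sub heSM)).mono
        hmG).aestronglyMeasurable).norm ?_
    filter_upwards [heeb] with ω h
    have h' : |ehat ω - e ω| ≤ 1 := by rw [abs_sub_comm]; exact h
    rw [Real.norm_eq_abs, abs_abs, abs_mul]
    calc |ehat ω - e ω| * |ehat ω - e ω| ≤ 1 * 1 :=
          mul_le_mul h' h' (abs_nonneg _) zero_le_one
      _ = 1 := one_mul _
  have hdomint : Integrable (fun ω => (CD * c₁⁻¹) *
      (|(ehat ω - e ω) * (muhat ω - μ ω)| + Clam * |(ehat ω - e ω) * (ehat ω - e ω)|)) P :=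
    ((hI1int.add (hI2int.const_mul Clam)).const_mul _)
  -- a.e. norm bound for the RHS integrand
  have hnormb : ∀ᵐ ω ∂P, ‖((s1sq ω * s0sq ω * That ω)⁻¹ * (e ω - ehat ω) *
      ((μ ω - muhat ω) - (1 - S ω) * lam ω * (e ω - ehat ω))) • D ω‖ ≤
      (CD * c₁⁻¹) *
      (|(ehat ω - e ω) * (muhat ω - μ ω)| + Clam * |(ehat ω - e ω) * (ehat ω - e ω)|) := by
    filter_upwards [hlamb] with ω hl
    rw [norm_smul, Real.norm_eq_abs]
    have hhb : |(μ ω - muhat ω) - (1 - S ω) * lam ω * (e ω - ehat ω)| ≤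
        |muhat ω - μ ω| + Clam * |ehat ω - e ω| := by
      calc |(μ ω - muhat ω) - (1 - S ω) * lam ω * (e ω - ehat ω)|
          ≤ |μ ω - muhat ω| + |(1 - S ω) * lam ω * (e ω - ehat ω)| := abs_sub _ _
        _ ≤ |muhat ω - μ ω| + Clam * |ehat ω - e ω| := by
            refine add_le_add (le_of_eq (abs_sub_comm _ _)) ?_
            have h5 : |(1 - S ω) * lam ω * (e ω - ehat ω)| ≤ 1 * Clam * |ehat ω - e ω| :=
              abs_mul3_le (hS1b ω) hl (le_of_eq (abs_sub_comm (e ω) (ehat ω)))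
                zero_le_one hClam0
            calc |(1 - S ω) * lam ω * (e ω - ehat ω)| ≤ 1 * Clam * |ehat ω - e ω| := h5
              _ = Clam * |ehat ω - e ω| := by ring
    have hstep : |(s1sq ω * s0sq ω * That ω)⁻¹ * (e ω - ehat ω) *
          ((μ ω - muhat ω) - (1 - S ω) * lam ω * (e ω - ehat ω))|
        ≤ c₁⁻¹ * |ehat ω - e ω| * (|muhat ω - μ ω| + Clam * |ehat ω - e ω|) :=
      abs_mul3_le (hKabs ω) (le_of_eq (abs_sub_comm (e ω) (ehat ω))) hhb
        (inv_nonneg.2 hc₁.le) (abs_nonneg _)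
    calc |(s1sq ω * s0sq ω * That ω)⁻¹ * (e ω - ehat ω) *
          ((μ ω - muhat ω) - (1 - S ω) * lam ω * (e ω - ehat ω))| * ‖D ω‖
        ≤ (c₁⁻¹ * |ehat ω - e ω| * (|muhat ω - μ ω| + Clam * |ehat ω - e ω|)) * CD :=
          mul_le_mul hstep (hDb ω) (norm_nonneg _)
            (mul_nonneg (mul_nonneg (inv_nonneg.2 hc₁.le) (abs_nonneg _))
              (add_nonneg (abs_nonneg _) (mul_nonneg hClam0 (abs_nonneg _))))
      _ = (CD * c₁⁻¹) * (|ehat ω - e ω| * |muhat ω - μ ω| +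
            Clam * (|ehat ω - e ω| * |ehat ω - e ω|)) := by ring
      _ = (CD * c₁⁻¹) *
            (|(ehat ω - e ω) * (muhat ω - μ ω)| + Clam * |(ehat ω - e ω) * (ehat ω - e ω)|) := by
          rw [abs_mul, abs_mul]
  -- put everything together
  set a := (eLpNorm (fun ω => ehat ω - e ω) 2 P).toReal with ha
  set b := (eLpNorm (fun ω => muhat ω - μ ω) 2 P).toReal with hb
  have ha0 : 0 ≤ a := ENNReal.toReal_nonneg
  have hb0 : 0 ≤ b := ENNReal.toReal_nonneg
  calc ‖∫ ω, ((s1sq ω * s0sq ω * That ω)⁻¹ * (e ω - ehat ω) *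
        ((μ ω - muhat ω) - (1 - S ω) * lam ω * (e ω - ehat ω))) • D ω ∂P‖
      ≤ ∫ ω, ‖((s1sq ω * s0sq ω * That ω)⁻¹ * (e ω - ehat ω) *
        ((μ ω - muhat ω) - (1 - S ω) * lam ω * (e ω - ehat ω))) • D ω‖ ∂P :=
        norm_integral_le_integral_norm _
    _ ≤ ∫ ω, (CD * c₁⁻¹) * (|(ehat ω - e ω) * (muhat ω - μ ω)| +
          Clam * |(ehat ω - e ω) * (ehat ω - e ω)|) ∂P :=
        integral_mono_ae hG3int.norm hdomint hnormb
    _ = (CD * c₁⁻¹) * ((∫ ω, |(ehat ω - e ω) * (muhat ω - μ ω)| ∂P) +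
          Clam * ∫ ω, |(ehat ω - e ω) * (ehat ω - e ω)| ∂P) := by
        rw [integral_const_mul, integral_add hI1int (hI2int.const_mul Clam),
          integral_const_mul]
    _ ≤ (CD * c₁⁻¹) * (a * b + Clam * (a * a)) :=
        mul_le_mul_of_nonneg_left
          (add_le_add hCS1 (mul_le_mul_of_nonneg_left hCS2 hClam0))
          (mul_nonneg hCD0 (inv_nonneg.2 hc₁.le))
    _ ≤ (CD * c₂ / c₁ ^ 2 * max 1 Clam) * (a * b + a ^ 2) := by
        have hc₂0 : 0 ≤ c₂ := le_trans hc₁.le hc₁₂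
        have hinv0 : (0:ℝ) ≤ (c₁ ^ 2)⁻¹ := by positivity
        have hM0 : 0 ≤ CD * c₂ / c₁ ^ 2 :=
          div_nonneg (mul_nonneg hCD0 hc₂0) (by positivity)
        have hkey : CD * c₁ * (c₁ ^ 2)⁻¹ ≤ CD * c₂ * (c₁ ^ 2)⁻¹ :=
          mul_le_mul_of_nonneg_right (mul_le_mul_of_nonneg_left hc₁₂ hCD0) hinv0
        have e1 : CD * c₁⁻¹ = CD * c₁ * (c₁ ^ 2)⁻¹ := by
          field_simp
        have e2 : CD * c₂ / c₁ ^ 2 = CD * c₂ * (c₁ ^ 2)⁻¹ := div_eq_mul_inv _ _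
        have h1 : CD * c₁⁻¹ ≤ CD * c₂ / c₁ ^ 2 * max 1 Clam := by
          rw [e1]
          calc CD * c₁ * (c₁ ^ 2)⁻¹ ≤ CD * c₂ * (c₁ ^ 2)⁻¹ := hkey
            _ = CD * c₂ / c₁ ^ 2 := e2.symm
            _ ≤ CD * c₂ / c₁ ^ 2 * max 1 Clam :=
              le_mul_of_one_le_right hM0 (le_max_left _ _)
        have h2 : CD * c₁⁻¹ * Clam ≤ CD * c₂ / c₁ ^ 2 * max 1 Clam := by
          rw [e1]
          calc CD * c₁ * (c₁ ^ 2)⁻¹ * Clam ≤ CD * c₂ * (c₁ ^ 2)⁻¹ * Clam :=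
              mul_le_mul_of_nonneg_right hkey hClam0
            _ = CD * c₂ / c₁ ^ 2 * Clam := by rw [e2]
            _ ≤ CD * c₂ / c₁ ^ 2 * max 1 Clam :=
              mul_le_mul_of_nonneg_left (le_max_right _ _) hM0
        calc (CD * c₁⁻¹) * (a * b + Clam * (a * a))
            = (CD * c₁⁻¹) * (a * b) + (CD * c₁⁻¹ * Clam) * a ^ 2 := by ring
          _ ≤ (CD * c₂ / c₁ ^ 2 * max 1 Clam) * (a * b) +
              (CD * c₂ / c₁ ^ 2 * max 1 Clam) * a ^ 2 :=
              add_le_add (mul_le_mul_of_nonneg_right h1 (by positivity))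
                (mul_le_mul_of_nonneg_right h2 (sq_nonneg a))
          _ = (CD * c₂ / c₁ ^ 2 * max 1 Clam) * (a * b + a ^ 2) := by ring
end
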